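/- arXiv:2212.07870 — 6 statements merged into one kernel-verified Lean document; each statement's English description precedes it below -/
import Mathlib

section
/- For a string S of length m, if B ⊆ {0,...,m} is prefix-incomparable for S (i.e., for all i < j in B, S[1..i] is not a border of S[1..j]), then |B| is at most the number of indices i ∈ {0,...,m} that are not in the image of the failure function f_S. -/
open List

section Defs

variable {V : Type*} {α : Type*}

/-- A border of `t` is a proper prefix of `t` that is also a proper suffix of `t`. -/
def IsBorder (b t : List α) : Prop :=
  b <+: t ∧ b <:+ t ∧ b.length < t.length

/-- A directed graph (edge relation) is acyclic. -/
def Acyclic (E : V → V → Prop) : Prop :=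
  ∀ v, ¬ Relation.TransGen E v v

def IsSource (E : V → V → Prop) (v : V) : Prop := ∀ u, ¬ E u v

def IsSink (E : V → V → Prop) (v : V) : Prop := ∀ w, ¬ E v w

/-- A path is a nonempty list of vertices with consecutive edges. -/
def IsPath (E : V → V → Prop) (p : List V) : Prop := p ≠ [] ∧ p.Chain' E

/-- The edge `(u,v)` occurs (as a consecutive pair) on the path `p`. -/
def EdgeOn (p : List V) (u v : V) : Prop := ∃ l₁ l₂, p = l₁ ++ u :: v :: l₂

/-- A source-to-sink path. -/
def SrcSinkPath (E : V → V → Prop) (p : List V) : Prop :=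
  IsPath E p ∧ (∃ s, p.head? = some s ∧ IsSource E s) ∧ ∃ t, p.getLast? = some t ∧ IsSink E t

/-- `μ_s(v)`: the number of source-to-`v` paths. -/
noncomputable def muS (E : V → V → Prop) (v : V) : ℕ :=
  Set.ncard {p : List V | IsPath E p ∧ (∃ s, p.head? = some s ∧ IsSource E s) ∧ p.getLast? = some v}

/-- `μ_t(v)`: the number of `v`-to-sink paths. -/
noncomputable def muT (E : V → V → Prop) (v : V) : ℕ :=
  Set.ncard {p : List V | IsPath E p ∧ p.head? = some v ∧ ∃ t, p.getLast? = some t ∧ IsSink E t}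

/-- `μ(e)` for `e = (u,v)`: the number of source-to-sink paths containing the edge `(u,v)`. -/
noncomputable def muE (E : V → V → Prop) (u v : V) : ℕ :=
  Set.ncard {p : List V | SrcSinkPath E p ∧ EdgeOn p u v}

def NoIsolated (E : V → V → Prop) : Prop := ∀ v : V, (∃ u, E u v) ∨ ∃ w, E v w

/-- `G` is a `k`-funnel: every source-to-sink path contains a `k`-private edge. -/
def KFunnel (E : V → V → Prop) (k : ℕ) : Prop :=
  ∀ p, SrcSinkPath E p → ∃ u v, EdgeOn p u v ∧ muE E u v ≤ k

/-- `G` is a funnel: every source-to-sink path contains a private edge. -/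
def Funnel (E : V → V → Prop) : Prop :=
  ∀ p, SrcSinkPath E p → ∃ u v, EdgeOn p u v ∧ muE E u v = 1

/-- `B_v`: the set of lengths `i` such that some path ending at `v` spells `S[1..i]`
(with `0` included for the empty path). -/
def MatchSet (E : V → V → Prop) (ℓ : V → α) (S : List α) (v : V) : Set ℕ :=
  {i | i ≤ S.length ∧ (i = 0 ∨ ∃ p, IsPath E p ∧ p.getLast? = some v ∧ p.map ℓ = S.take i)}

end Defs

open Classical

/-- A prefix-incomparable set `B ⊆ {0,…,m}` has size at most the number of
indices in `{0,…,m}` not in the image of the failure function of `S`. -/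

theorem stmt0 {α : Type*} (S : List α) (m : ℕ) (hm : S.length = m)
    (f : ℕ → ℕ)
    (hf : ∀ i, 1 ≤ i → i ≤ m →
      IsBorder (S.take (f i)) (S.take i) ∧ ∀ b, IsBorder (S.take b) (S.take i) → b ≤ f i)
    (B : Finset ℕ) (hB : B ⊆ Finset.Icc 0 m)
    (hinc : ∀ i ∈ B, ∀ j ∈ B, i < j → ¬ IsBorder (S.take i) (S.take j)) :
    B.card ≤ ((Finset.Icc 0 m).filter (fun i => ∀ j ∈ Finset.Icc 1 m, f j ≠ i)).card := by
  classical
  have hflt : ∀ j, 1 ≤ j → j ≤ m → f j < j := by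
    intro j h1 h2
    have hb := (hf j h1 h2).1
    have hlen := hb.2.2
    simp only [List.length_take, hm] at hlen
    omega
  set E : ℕ → ℕ → Prop := fun a b => f a = b ∧ 1 ≤ a ∧ a ≤ m with hE
  have hdec : ∀ a b, E a b → b < a := by
    rintro a b ⟨h1, h2, h3⟩
    subst h1; exact hflt a h2 h3
  have hle : ∀ a b, Relation.ReflTransGen E a b → b ≤ a := by
    intro a b h
    induction h with
    | refl => exact le_refl _
    | tail h1 h2 ih => exact le_trans (le_of_lt (hdec _ _ h2)) ih
  have hRU : Relator.RightUnique E := by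
    rintro a b c ⟨h1, _, _⟩ ⟨h2, _, _⟩; omega
  have btrans : ∀ (a b c : List α), IsBorder a b → IsBorder b c → IsBorder a c := by
    rintro a b c ⟨p1, s1, l1⟩ ⟨p2, s2, l2⟩
    exact ⟨p1.trans p2, s1.trans s2, lt_trans l1 l2⟩
  have lemA : ∀ j i, Relation.ReflTransGen E j i → i ≠ j → IsBorder (S.take i) (S.take j) := by
    intro j i h
    induction h using Relation.ReflTransGen.head_induction_on with
    | refl => intro h; exact absurd rfl h
    | head hstep hrest ih =>
      rename_i a c
      intro _
      obtain ⟨hfa, h1, h2⟩ := hstep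
      have hb : IsBorder (S.take (f a)) (S.take a) := (hf a h1 h2).1
      rw [hfa] at hb
      by_cases hic : i = c
      · rw [hic]; exact hb
      · exact btrans _ _ _ (ih hic) hb
  have lemB : ∀ k i, i ≤ m → m - i ≤ k → ∃ t, t ≤ m ∧
      (∀ j ∈ Finset.Icc 1 m, f j ≠ t) ∧ Relation.ReflTransGen E t i := by
    intro k
    induction k with
    | zero =>
      intro i hi hk
      refine ⟨i, hi, ?_, Relation.ReflTransGen.refl⟩
      intro j hj hfj
      rw [Finset.mem_Icc] at hj
      have := hflt j hj.1 hj.2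
      omega
    | succ k ih =>
      intro i hi hk
      by_cases hni : ∀ j ∈ Finset.Icc 1 m, f j ≠ i
      · exact ⟨i, hi, hni, Relation.ReflTransGen.refl⟩
      · push_neg at hni
        obtain ⟨j, hj, hfj⟩ := hni
        rw [Finset.mem_Icc] at hj
        have hji : i < j := by have := hflt j hj.1 hj.2; omega
        obtain ⟨t, ht1, ht2, ht3⟩ := ih j hj.2 (by omega)
        exact ⟨t, ht1, ht2, ht3.tail ⟨hfj, hj.1, hj.2⟩⟩
  have lemB' : ∀ i, ∃ t, i ≤ m → t ≤ m ∧
      (∀ j ∈ Finset.Icc 1 m, f j ≠ t) ∧ Relation.ReflTransGen E t i := by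
    intro i
    by_cases hi : i ≤ m
    · obtain ⟨t, h⟩ := lemB (m - i) i hi le_rfl
      exact ⟨t, fun _ => h⟩
    · exact ⟨0, fun h => absurd h hi⟩
  choose φ hφ using lemB'
  apply Finset.card_le_card_of_injOn φ
  · intro i hiB
    have hi : i ≤ m := (Finset.mem_Icc.mp (hB hiB)).2
    obtain ⟨h1, h2, _⟩ := hφ i hi
    simp only [Finset.mem_coe, Finset.mem_filter, Finset.mem_Icc]
    exact ⟨⟨Nat.zero_le _, h1⟩, fun j hj => h2 j (Finset.mem_Icc.mpr hj)⟩
  · intro i hiB i' hi'B heq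
    by_contra hne
    have hi : i ≤ m := (Finset.mem_Icc.mp (hB hiB)).2
    have hi' : i' ≤ m := (Finset.mem_Icc.mp (hB hi'B)).2
    obtain ⟨_, _, hr⟩ := hφ i hi
    obtain ⟨_, _, hr'⟩ := hφ i' hi'
    rw [heq] at hr
    have key : ∀ a b, a ∈ B → b ∈ B → a < b →
        Relation.ReflTransGen E (φ i') a → Relation.ReflTransGen E (φ i') b → False := by
      intro a b haB hbB hab hra hrb
      rcases Relation.ReflTransGen.total_of_right_unique hRU hrb hra with h | h
      · exact hinc a haB b hbB hab (lemA b a h (by omega))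
      · exact absurd (hle _ _ h) (by omega)
    rcases Nat.lt_or_ge i i' with h | h
    · exact key i i' hiB hi'B h hr hr'
    · exact key i' i hi'B hiB (by omega) hr' hr
end

section
/- Let G be a DAG, v a vertex, and let μ_s(v) denote the number of source-to-v paths. Then |PI_v| ≤ μ_s(v), where PI_v is the unique prefix-incomparable set representing all prefix matches of S ending at v. -/
open List

section AuxProof

variable {V : Type*} {α : Type*}

lemma aux_chain_transGen {E : V → V → Prop} :
    ∀ (l : List V) (a b : V), List.Chain E a l → b ∈ l → Relation.TransGen E a b := by
  intro l
  induction l with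
  | nil => intro a b _ hb; simp at hb
  | cons c l ih =>
    intro a b hch hb
    replace hch := List.isChain_cons_cons.mp hch
    rcases List.mem_cons.mp hb with rfl | hb
    · exact Relation.TransGen.single hch.1
    · exact (ih c b hch.2 hb).head hch.1

lemma aux_nodup_of_chain' {E : V → V → Prop} (hE : Acyclic E) :
    ∀ (l : List V), l.Chain' E → l.Nodup := by
  intro l
  induction l with
  | nil => simp
  | cons a l ih =>
    intro h
    have h1 : List.Chain E a l := h
    refine List.nodup_cons.mpr ⟨?_, ih h.tail⟩
    intro ha
    exact hE a (aux_chain_transGen l a a h1 ha)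

lemma aux_paths_finite [Fintype V] {E : V → V → Prop} (hE : Acyclic E)
    (T : Set (List V)) (hT : ∀ p ∈ T, IsPath E p) : T.Finite := by
  apply Set.Finite.subset (List.finite_length_le V (Fintype.card V))
  intro p hp
  exact List.Nodup.length_le_card (aux_nodup_of_chain' hE p (hT p hp).2)

lemma aux_extend_to_source [Fintype V] {E : V → V → Prop} (hE : Acyclic E) {p : List V} {v : V}
    (hp : IsPath E p) (hv : p.getLast? = some v) :
    ∃ q, IsPath E q ∧ (∃ s, q.head? = some s ∧ IsSource E s) ∧ q.getLast? = some v ∧ p <:+ q := by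
  classical
  set T : Set (List V) := {q : List V | IsPath E q ∧ q.getLast? = some v ∧ p <:+ q} with hTdef
  have hfin : T.Finite := aux_paths_finite hE T (fun q hq => hq.1)
  have hne : T.Nonempty := ⟨p, hp, hv, List.suffix_refl p⟩
  obtain ⟨q, hq, hmax⟩ := hfin.exists_maximalFor (fun l => l.length) T hne
  obtain ⟨⟨hqne, hqch⟩, hqlast, hqsuf⟩ := hq
  obtain ⟨h, t, rfl⟩ := List.exists_cons_of_ne_nil hqne
  by_cases hs : IsSource E h
  · exact ⟨h :: t, ⟨hqne, hqch⟩, ⟨h, rfl, hs⟩, hqlast, hqsuf⟩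
  · exfalso
    simp only [IsSource, not_forall, not_not] at hs
    obtain ⟨u, hu⟩ := hs
    have hmem : (u :: h :: t) ∈ T := by
      refine ⟨⟨List.cons_ne_nil _ _, List.isChain_cons_cons.mpr ⟨hu, hqch⟩⟩, ?_, hqsuf.trans (List.suffix_cons u _)⟩
      rwa [List.getLast?_cons_cons]
    have := hmax hmem (by simp)
    simp at this

end AuxProof

/-- `|PI_v| ≤ μ_s(v)`. -/
theorem stmt3 {V α : Type*} [Fintype V] (E : V → V → Prop) (hE : Acyclic E)
    (ℓ : V → α) (S : List α) (v : V) (PI : Set ℕ)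
    (hsub : PI ⊆ MatchSet E ℓ S v)
    (hinc : ∀ i ∈ PI, ∀ j ∈ PI, i < j → ¬ IsBorder (S.take i) (S.take j))
    (hrep : ∀ i ∈ MatchSet E ℓ S v, ∃ j ∈ PI, i = j ∨ IsBorder (S.take i) (S.take j)) :
    PI.ncard ≤ muS E v := by
  classical
  have hfinT : {p : List V | IsPath E p ∧ (∃ s, p.head? = some s ∧ IsSource E s) ∧ p.getLast? = some v}.Finite :=
    aux_paths_finite hE _ (fun p hp => hp.1)
  show PI.ncard ≤ Set.ncard _
  by_cases h0 : 0 ∈ PI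
  · have hPI : PI = {0} := by
      ext j
      simp only [Set.mem_singleton_iff]
      refine ⟨fun hj => ?_, fun hj => hj ▸ h0⟩
      by_contra hne
      have hjpos : 0 < j := Nat.pos_of_ne_zero hne
      have hjle : j ≤ S.length := (hsub hj).1
      refine hinc 0 h0 j hj hjpos ⟨?_, ?_, ?_⟩
      · simp
      · simp
      · simp only [List.take_zero, List.length_nil, List.length_take]
        omega
    rw [hPI, Set.ncard_singleton]
    rw [Nat.one_le_iff_ne_zero, ← Nat.pos_iff_ne_zero, Set.ncard_pos hfinT]
    obtain ⟨q, hq1, hq2, hq3, _⟩ :=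
      aux_extend_to_source hE (p := [v]) (v := v) ⟨by simp, List.isChain_singleton v⟩ (by simp)
    exact ⟨q, hq1, hq2, hq3⟩
  · have key : ∀ i ∈ PI, ∃ q, (IsPath E q ∧ (∃ s, q.head? = some s ∧ IsSource E s) ∧
        q.getLast? = some v) ∧ ∃ p, p.map ℓ = S.take i ∧ p <:+ q := by
      intro i hi
      obtain ⟨hile, h⟩ := hsub hi
      rcases h with rfl | ⟨p, hp, hpl, hpm⟩
      · exact absurd hi h0
      · obtain ⟨q, hq1, hq2, hq3, hq4⟩ := aux_extend_to_source hE hp hpl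
        exact ⟨q, ⟨hq1, hq2, hq3⟩, p, hpm, hq4⟩
    choose! f hA hB using key
    have main : ∀ i ∈ PI, ∀ j ∈ PI, i < j → f i = f j → False := by
      intro i hi j hj hij heq
      obtain ⟨pi, hpimap, hpisuf⟩ := hB i hi
      obtain ⟨pj, hpjmap, hpjsuf⟩ := hB j hj
      rw [heq] at hpisuf
      have hile : i ≤ S.length := (hsub hi).1
      have hjle : j ≤ S.length := (hsub hj).1
      have hpil : pi.length = i := by
        have := congrArg List.length hpimap
        simp only [List.length_map, List.length_take] at this
        omega
      have hpjl : pj.length = j := by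
        have := congrArg List.length hpjmap
        simp only [List.length_map, List.length_take] at this
        omega
      have hsuf : pi <:+ pj := by
        rcases List.suffix_or_suffix_of_suffix hpisuf hpjsuf with h | h
        · exact h
        · exfalso; have := h.length_le; omega
      have hsufS : S.take i <:+ S.take j := by
        rw [← hpimap, ← hpjmap]; exact hsuf.map ℓ
      have hpre : S.take i <+: S.take j := by
        have hh : (S.take j).take i = S.take i := by
          rw [List.take_take, Nat.min_eq_left hij.le]
        rw [← hh]; exact List.take_prefix _ _
      refine hinc i hi j hj hij ⟨hpre, hsufS, ?_⟩
      simp only [List.length_take]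
      omega
    have hinj : Set.InjOn f PI := by
      intro i hi j hj heq
      by_contra hne
      rcases Nat.lt_or_ge i j with h | h
      · exact main i hi j hj h heq
      · exact main j hj i hi (lt_of_le_of_ne h (Ne.symm hne)) heq.symm
    exact Set.ncard_le_ncard_of_injOn f hA hinj hfinT
end

section
/- A DAG G is a funnel if and only if there exists a partition V = V1 ∪ V2 such that G[V1] is an out-forest (every vertex has indegree at most 1 within G[V1]), G[V2] is an in-forest (every vertex has outdegree at most 1), and there are no edges from V2 to V1. -/
open List

section Helpers

open Relation

variable {V : Type*} [Fintype V] {E : V → V → Prop}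

lemma chain'_nodup (hE : Acyclic E) {p : List V} (hp : p.Chain' E) : p.Nodup := by
  by_contra h
  obtain ⟨x, hx⟩ := List.exists_duplicate_iff_not_nodup.2 h
  have hs : [x, x] <+ p := List.duplicate_iff_sublist.1 hx
  haveI : IsTrans V (Relation.TransGen E) := ⟨fun _ _ _ => Relation.TransGen.trans⟩
  have : List.Chain' (Relation.TransGen E) [x, x] :=
    (hp.imp fun _ _ h => Relation.TransGen.single h).sublist hs
  exact hE x (List.isChain_pair.1 this)

lemma finite_of_chain' (hE : Acyclic E) {S : Set (List V)}
    (hS : ∀ p ∈ S, p.Chain' E) : S.Finite := by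
  apply (List.finite_length_le V (Fintype.card V)).subset
  intro p hp
  exact (chain'_nodup hE (hS p hp)).length_le_card

lemma muS_set_finite (hE : Acyclic E) (v : V) :
    {p : List V | IsPath E p ∧ (∃ s, p.head? = some s ∧ IsSource E s) ∧
      p.getLast? = some v}.Finite :=
  finite_of_chain' hE fun _ hp => hp.1.2

lemma muT_set_finite (hE : Acyclic E) (v : V) :
    {p : List V | IsPath E p ∧ p.head? = some v ∧
      ∃ t, p.getLast? = some t ∧ IsSink E t}.Finite :=
  finite_of_chain' hE fun _ hp => hp.1.2

lemma muE_set_finite (hE : Acyclic E) (u v : V) :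
    {p : List V | SrcSinkPath E p ∧ EdgeOn p u v}.Finite :=
  finite_of_chain' hE fun _ hp => hp.1.1.2

lemma acyclic_flip (hE : Acyclic E) : Acyclic (flip E) := fun v h =>
  hE v ((Relation.transGen_swap).1 h)

lemma exists_src_path (hE : Acyclic E) (v : V) :
    ∃ p : List V, IsPath E p ∧ (∃ s, p.head? = some s ∧ IsSource E s) ∧
      p.getLast? = some v := by
  haveI : IsTrans V (Relation.TransGen E) := ⟨fun _ _ _ => Relation.TransGen.trans⟩
  haveI : IsIrrefl V (Relation.TransGen E) := ⟨hE⟩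
  induction v using (Finite.wellFounded_of_trans_of_irrefl (Relation.TransGen E)).induction with
  | _ v ih =>
    by_cases hv : IsSource E v
    · exact ⟨[v], ⟨by simp, List.isChain_singleton v⟩, ⟨v, rfl, hv⟩, rfl⟩
    · obtain ⟨u, hu⟩ : ∃ u, E u v := by simpa [IsSource] using hv
      obtain ⟨p, ⟨hne, hch⟩, hsrc, hlast⟩ := ih u (Relation.TransGen.single hu)
      refine ⟨p ++ [v], ⟨by simp, ?_⟩, ?_, by simp⟩
      · unfold List.Chain'; rw [List.isChain_append]
        refine ⟨hch, List.isChain_singleton v, ?_⟩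
        intro x hx y hy
        simp only [List.head?_cons, Option.mem_def, Option.some.injEq] at hy
        rw [hlast] at hx
        simp only [Option.mem_def, Option.some.injEq] at hx
        subst hx; subst hy; exact hu
      · obtain ⟨s, hs, hsrc'⟩ := hsrc
        exact ⟨s, by rw [List.head?_append_of_ne_nil _ hne]; exact hs, hsrc'⟩

set_option linter.unusedSectionVars false

lemma isPath_flip_iff {p : List V} : IsPath (flip E) p ↔ IsPath E p.reverse := by
  unfold IsPath
  unfold List.Chain'; rw [List.isChain_reverse]
  simp [flip]; exact fun _ => Iff.rfl

lemma isSource_flip_iff {s : V} : IsSource (flip E) s ↔ IsSink E s := Iff.rfl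

lemma isSink_flip_iff {s : V} : IsSink (flip E) s ↔ IsSource E s := Iff.rfl

lemma muT_eq_muS_flip (E : V → V → Prop) (v : V) : muT E v = muS (flip E) v := by
  unfold muT muS
  rw [show {p : List V | IsPath (flip E) p ∧ (∃ s, p.head? = some s ∧ IsSource (flip E) s) ∧
      p.getLast? = some v} = List.reverse '' {p : List V | IsPath E p ∧ p.head? = some v ∧
      ∃ t, p.getLast? = some t ∧ IsSink E t} from ?_]
  · rw [Set.ncard_image_of_injective _ List.reverse_injective]
  ext q
  simp only [Set.mem_image, Set.mem_setOf_eq]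
  constructor
  · rintro ⟨hq, ⟨s, hs, hsrc⟩, hl⟩
    refine ⟨q.reverse, ⟨isPath_flip_iff.1 hq, ?_, s, ?_, hsrc⟩, by simp⟩
    · rw [List.head?_reverse]; exact hl
    · rw [List.getLast?_reverse]; exact hs
  · rintro ⟨r, ⟨hr, hh, t, ht, hsink⟩, rfl⟩
    refine ⟨isPath_flip_iff.2 (by simpa using hr), ⟨t, ?_, hsink⟩, ?_⟩
    · rw [List.head?_reverse]; exact ht
    · rw [List.getLast?_reverse]; exact hh

lemma edgeOn_reverse {p : List V} {x y : V} (h : EdgeOn p x y) : EdgeOn p.reverse y x := by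
  obtain ⟨l₁, l₂, rfl⟩ := h
  exact ⟨l₂.reverse, l₁.reverse, by simp⟩

lemma srcSinkPath_flip_iff {p : List V} :
    SrcSinkPath (flip E) p ↔ SrcSinkPath E p.reverse := by
  unfold SrcSinkPath
  rw [isPath_flip_iff]
  constructor
  · rintro ⟨hp, ⟨s, hs, hsrc⟩, t, ht, hsink⟩
    exact ⟨hp, ⟨t, by rw [List.head?_reverse]; exact ht, hsink⟩,
      s, by rw [List.getLast?_reverse]; exact hs, hsrc⟩
  · rintro ⟨hp, ⟨s, hs, hsrc⟩, t, ht, hsink⟩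
    rw [List.head?_reverse] at hs
    rw [List.getLast?_reverse] at ht
    exact ⟨hp, ⟨t, ht, hsink⟩, s, hs, hsrc⟩

lemma muE_flip (E : V → V → Prop) (u v : V) : muE (flip E) u v = muE E v u := by
  unfold muE
  rw [show {p : List V | SrcSinkPath (flip E) p ∧ EdgeOn p u v} =
      List.reverse '' {p : List V | SrcSinkPath E p ∧ EdgeOn p v u} from ?_]
  · rw [Set.ncard_image_of_injective _ List.reverse_injective]
  ext q
  simp only [Set.mem_image, Set.mem_setOf_eq]
  constructor
  · rintro ⟨hq, he⟩
    exact ⟨q.reverse, ⟨srcSinkPath_flip_iff.1 hq, edgeOn_reverse he⟩, by simp⟩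
  · rintro ⟨r, ⟨hr, he⟩, rfl⟩
    refine ⟨srcSinkPath_flip_iff.2 (by simpa using hr), ?_⟩
    have := edgeOn_reverse (p := r) (x := v) (y := u) he
    simpa using this

/-- monotonicity of `muS` along a path from `a` to `b`. -/
lemma muS_le_of_path (hE : Acyclic E) {a b : V} {r : List V}
    (hr : r.Chain' E) (hh : r.head? = some a) (hl : r.getLast? = some b) :
    muS E a ≤ muS E b := by
  unfold muS
  obtain ⟨t, rfl⟩ : ∃ t, r = a :: t := by
    cases r with
    | nil => simp at hh
    | cons c t =>
      obtain rfl : c = a := by simpa using hh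
      exact ⟨t, rfl⟩
  refine Set.ncard_le_ncard_of_injOn (fun q => q ++ t) ?_ ?_ (muS_set_finite hE b)
  · rintro q ⟨⟨hne, hch⟩, hsrc, hlast⟩
    refine ⟨⟨by simp [hne], ?_⟩, ?_, ?_⟩
    · unfold List.Chain'; rw [List.isChain_append]
      refine ⟨hch, hr.tail, ?_⟩
      intro x hx y hy
      rw [hlast] at hx
      simp only [Option.mem_def, Option.some.injEq] at hx
      subst hx
      exact (List.isChain_cons.1 hr).1 y hy
    · obtain ⟨s, hs, hsrc'⟩ := hsrc
      exact ⟨s, by rw [List.head?_append_of_ne_nil _ hne]; exact hs, hsrc'⟩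
    · cases t with
      | nil =>
        obtain rfl : a = b := by simpa using hl
        simpa using hlast
      | cons c t' =>
        rw [List.getLast?_append_of_ne_nil _ (by simp)]
        simpa using hl
  · intro q₁ _ q₂ _ h
    exact List.append_cancel_right h

lemma muS_pos (hE : Acyclic E) (v : V) : 1 ≤ muS E v := by
  have h := (Set.ncard_pos (muS_set_finite hE v)).2 (exists_src_path hE v)
  unfold muS
  omega

lemma muT_pos (hE : Acyclic E) (v : V) : 1 ≤ muT E v := by
  rw [muT_eq_muS_flip]
  exact muS_pos (acyclic_flip hE) v

lemma exists_sink_path (hE : Acyclic E) (v : V) :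
    ∃ p : List V, IsPath E p ∧ p.head? = some v ∧
      ∃ t, p.getLast? = some t ∧ IsSink E t := by
  obtain ⟨q, hq, ⟨s, hs, hsrc⟩, hl⟩ := exists_src_path (acyclic_flip hE) v
  refine ⟨q.reverse, isPath_flip_iff.1 (by simpa using hq), ?_, s, ?_, hsrc⟩
  · rw [List.head?_reverse]; exact hl
  · rw [List.getLast?_reverse]; exact hs

lemma muT_le_of_path (hE : Acyclic E) {a b : V} {r : List V}
    (hr : r.Chain' E) (hh : r.head? = some a) (hl : r.getLast? = some b) :
    muT E b ≤ muT E a := by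
  rw [muT_eq_muS_flip, muT_eq_muS_flip]
  refine muS_le_of_path (acyclic_flip hE) (r := r.reverse) ?_ ?_ ?_
  · unfold List.Chain'; rw [List.isChain_reverse]; simpa [flip, List.Chain'] using hr
  · rw [List.head?_reverse]; exact hl
  · rw [List.getLast?_reverse]; exact hh

lemma muS_source (hE : Acyclic E) {s : V} (hs : IsSource E s) : muS E s = 1 := by
  unfold muS
  rw [Set.ncard_eq_one]
  refine ⟨[s], ?_⟩
  ext p
  simp only [Set.mem_setOf_eq, Set.mem_singleton_iff]
  constructor
  · rintro ⟨⟨hne, hch⟩, _, hlast⟩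
    obtain ⟨l, rfl⟩ : ∃ l, p = l ++ [s] := by
      refine ⟨p.dropLast, ?_⟩
      have h1 := List.getLast?_eq_getLast_of_ne_nil hne
      rw [h1] at hlast
      simp only [Option.some.injEq] at hlast
      rw [← hlast]
      exact (List.dropLast_append_getLast hne).symm
    cases l with
    | nil => rfl
    | cons c l' =>
      exfalso
      unfold List.Chain' at hch; rw [List.isChain_append] at hch
      obtain ⟨_, _, h3⟩ := hch
      refine hs ((c :: l').getLast (by simp)) (h3 _ ?_ s rfl)
      exact List.getLast?_eq_getLast_of_ne_nil (by simp)
  · rintro rfl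
    exact ⟨⟨by simp, List.isChain_singleton s⟩, ⟨s, rfl, hs⟩, rfl⟩

lemma muT_sink (hE : Acyclic E) {t : V} (ht : IsSink E t) : muT E t = 1 := by
  rw [muT_eq_muS_flip]
  exact muS_source (acyclic_flip hE) ht

lemma exists_concat_of_getLast? {l : List V} {x : V} (h : l.getLast? = some x) :
    ∃ l', l = l' ++ [x] :=
  ⟨l.dropLast, (List.dropLast_append_getLast? x h).symm⟩

lemma exists_cons_of_head? {l : List V} {x : V} (h : l.head? = some x) :
    ∃ l', l = x :: l' := by
  cases l with
  | nil => simp at h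
  | cons a t =>
    obtain rfl : a = x := by simpa using h
    exact ⟨t, rfl⟩

lemma muS_le_muE (hE : Acyclic E) {x y : V} (hxy : E x y) : muS E x ≤ muE E x y := by
  obtain ⟨r, ⟨hrne, hrch⟩, hrh, t, hrt, hsink⟩ := exists_sink_path hE y
  obtain ⟨r', rfl⟩ := exists_cons_of_head? hrh
  unfold muS muE
  refine Set.ncard_le_ncard_of_injOn (fun q => q ++ y :: r') ?_ ?_ (muE_set_finite hE x y)
  · rintro q ⟨⟨hne, hch⟩, ⟨s, hs, hsrc⟩, hlast⟩
    obtain ⟨l, rfl⟩ := exists_concat_of_getLast? hlast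
    refine ⟨⟨⟨by simp, ?_⟩, ⟨s, ?_, hsrc⟩, ⟨t, ?_, hsink⟩⟩, ⟨l, r', by simp⟩⟩
    · unfold List.Chain'; rw [List.isChain_append]
      refine ⟨hch, hrch, ?_⟩
      intro u hu w hw
      rw [hlast] at hu
      simp only [Option.mem_def, Option.some.injEq, List.head?_cons] at hu hw
      subst hu; subst hw; exact hxy
    · rw [List.head?_append_of_ne_nil _ (by simp)]; exact hs
    · rw [List.getLast?_append_of_ne_nil _ (by simp)]; exact hrt
  · intro q₁ _ q₂ _ h
    exact List.append_cancel_right h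

lemma muT_le_muE (hE : Acyclic E) {x y : V} (hxy : E x y) : muT E y ≤ muE E x y := by
  rw [muT_eq_muS_flip, ← muE_flip]
  exact muS_le_muE (acyclic_flip hE) hxy

lemma muE_pos (hE : Acyclic E) {x y : V} {p : List V} (hp : SrcSinkPath E p)
    (he : EdgeOn p x y) : 1 ≤ muE E x y := by
  have h := (Set.ncard_pos (muE_set_finite hE x y)).2 ⟨p, hp, he⟩
  unfold muE
  omega

/-- the prefix of `p` ending at `x` is a source-to-`x` path. -/
lemma prefix_mem_muS_set {l m : List V} {x : V} {p : List V} (hp : SrcSinkPath E p)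
    (hdecomp : p = l ++ x :: m) :
    (l ++ [x]) ∈ {q : List V | IsPath E q ∧ (∃ s, q.head? = some s ∧ IsSource E s) ∧
      q.getLast? = some x} := by
  obtain ⟨⟨hne, hch⟩, ⟨s, hs, hsrc⟩, _⟩ := hp
  subst hdecomp
  refine ⟨⟨by simp, hch.prefix ⟨m, by simp⟩⟩, ⟨s, ?_, hsrc⟩, ?_⟩
  · rw [show l ++ x :: m = (l ++ [x]) ++ m by simp, List.head?_append_of_ne_nil _ (by simp)] at hs
    exact hs
  · rw [List.getLast?_append_of_ne_nil _ (by simp)]; rfl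

/-- the suffix of `p` starting at `y` is a `y`-to-sink path. -/
lemma suffix_mem_muT_set {l : List V} {y : V} {m : List V} {p : List V} (hp : SrcSinkPath E p)
    (hdecomp : p = l ++ y :: m) :
    (y :: m) ∈ {q : List V | IsPath E q ∧ q.head? = some y ∧
      ∃ t, q.getLast? = some t ∧ IsSink E t} := by
  obtain ⟨⟨hne, hch⟩, _, ⟨t, ht, hsink⟩⟩ := hp
  subst hdecomp
  refine ⟨⟨by simp, hch.suffix ⟨l, rfl⟩⟩, rfl, t, ?_, hsink⟩
  rw [List.getLast?_append_of_ne_nil _ (by simp)] at ht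
  exact ht

lemma muE_eq_one (hE : Acyclic E) {x y : V} (hx : muS E x = 1) (hy : muT E y = 1)
    {p : List V} (hp : SrcSinkPath E p) (he : EdgeOn p x y) : muE E x y = 1 := by
  refine le_antisymm ?_ (muE_pos hE hp he)
  unfold muS at hx
  unfold muT at hy
  obtain ⟨q₀, hq₀⟩ := Set.ncard_eq_one.1 hx
  obtain ⟨r₀, hr₀⟩ := Set.ncard_eq_one.1 hy
  unfold muE
  rw [Set.ncard_le_one (finite_of_chain' hE fun _ h => h.1.1.2)]
  rintro p₁ ⟨hp₁, l₁, m₁, rfl⟩ p₂ ⟨hp₂, l₂, m₂, rfl⟩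
  have ha₁ : l₁ ++ [x] ∈ ({q₀} : Set (List V)) := hq₀ ▸ prefix_mem_muS_set hp₁ rfl
  have ha₂ : l₂ ++ [x] ∈ ({q₀} : Set (List V)) := hq₀ ▸ prefix_mem_muS_set hp₂ rfl
  have hb₁ : y :: m₁ ∈ ({r₀} : Set (List V)) :=
    hr₀ ▸ suffix_mem_muT_set (l := l₁ ++ [x]) hp₁ (List.append_assoc l₁ [x] (y :: m₁)).symm
  have hb₂ : y :: m₂ ∈ ({r₀} : Set (List V)) :=
    hr₀ ▸ suffix_mem_muT_set (l := l₂ ++ [x]) hp₂ (List.append_assoc l₂ [x] (y :: m₂)).symm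
  simp only [Set.mem_singleton_iff] at ha₁ ha₂ hb₁ hb₂
  have h1 : l₁ = l₂ := List.append_cancel_right (ha₁.trans ha₂.symm)
  have h2 : m₁ = m₂ := by
    have := hb₁.trans hb₂.symm
    simpa using this
  rw [h1, h2]

/-- uniqueness of reversed source paths in a predecessor-unique, predecessor-closed set -/
lemma rev_path_unique {W : Set V}
    (hcl : ∀ v ∈ W, ∀ u, E u v → u ∈ W)
    (huniq : ∀ v ∈ W, ∀ u u', E u v → E u' v → u = u') :
    ∀ n (q₁ q₂ : List V) (v : V), v ∈ W → q₁.length ≤ n →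
    q₁.Chain' (flip E) → q₁.head? = some v →
    (∀ s, q₁.getLast? = some s → IsSource E s) →
    q₂.Chain' (flip E) → q₂.head? = some v →
    (∀ s, q₂.getLast? = some s → IsSource E s) → q₁ = q₂ := by
  intro n
  induction n with
  | zero =>
    intro q₁ q₂ v _ hlen _ hh₁ _ _ _ _
    obtain ⟨t₁, rfl⟩ := exists_cons_of_head? hh₁
    simp at hlen
  | succ n ih =>
    intro q₁ q₂ v hv hlen hc₁ hh₁ hs₁ hc₂ hh₂ hs₂
    obtain ⟨t₁, rfl⟩ := exists_cons_of_head? hh₁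
    obtain ⟨t₂, rfl⟩ := exists_cons_of_head? hh₂
    cases t₁ with
    | nil =>
      cases t₂ with
      | nil => rfl
      | cons w₂ t₂' =>
        exfalso
        have hsrc : IsSource E v := hs₁ v rfl
        exact hsrc w₂ ((List.isChain_cons.1 hc₂).1 w₂ rfl)
    | cons w₁ t₁' =>
      cases t₂ with
      | nil =>
        exfalso
        have hsrc : IsSource E v := hs₂ v rfl
        exact hsrc w₁ ((List.isChain_cons.1 hc₁).1 w₁ rfl)
      | cons w₂ t₂' =>
        have he₁ : E w₁ v := (List.isChain_cons.1 hc₁).1 w₁ rfl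
        have he₂ : E w₂ v := (List.isChain_cons.1 hc₂).1 w₂ rfl
        obtain rfl : w₁ = w₂ := huniq v hv w₁ w₂ he₁ he₂
        have hrec : w₁ :: t₁' = w₁ :: t₂' := by
          refine ih (w₁ :: t₁') (w₁ :: t₂') w₁ (hcl v hv w₁ he₁) (by simpa using hlen)
            (List.isChain_cons.1 hc₁).2 rfl ?_ (List.isChain_cons.1 hc₂).2 rfl ?_
          · intro s hs
            exact hs₁ s (by rw [List.getLast?_cons_cons]; exact hs)
          · intro s hs
            exact hs₂ s (by rw [List.getLast?_cons_cons]; exact hs)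
        rw [hrec]

lemma muS_eq_one_of_closed (hE : Acyclic E) {W : Set V}
    (hcl : ∀ v ∈ W, ∀ u, E u v → u ∈ W)
    (huniq : ∀ v ∈ W, ∀ u u', E u v → E u' v → u = u')
    {v : V} (hv : v ∈ W) : muS E v = 1 := by
  obtain ⟨p₀, hp₀⟩ := exists_src_path hE v
  unfold muS
  rw [Set.ncard_eq_one]
  refine ⟨p₀, ?_⟩
  have key : ∀ p₁ p₂ : List V,
      (IsPath E p₁ ∧ (∃ s, p₁.head? = some s ∧ IsSource E s) ∧ p₁.getLast? = some v) →
      (IsPath E p₂ ∧ (∃ s, p₂.head? = some s ∧ IsSource E s) ∧ p₂.getLast? = some v) →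
      p₁ = p₂ := by
    rintro p₁ p₂ ⟨⟨hne₁, hc₁⟩, hs₁, hl₁⟩ ⟨⟨hne₂, hc₂⟩, hs₂, hl₂⟩
    have := rev_path_unique hcl huniq p₁.reverse.length p₁.reverse p₂.reverse v hv le_rfl
      (by unfold List.Chain'; rw [List.isChain_reverse]; simpa [flip, List.Chain'] using hc₁)
      (by rw [List.head?_reverse]; exact hl₁)
      (by
        intro s hs
        rw [List.getLast?_reverse] at hs
        obtain ⟨s', hs', hsrc⟩ := hs₁
        rw [hs'] at hs
        obtain rfl : s' = s := by simpa using hs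
        exact hsrc)
      (by unfold List.Chain'; rw [List.isChain_reverse]; simpa [flip, List.Chain'] using hc₂)
      (by rw [List.head?_reverse]; exact hl₂)
      (by
        intro s hs
        rw [List.getLast?_reverse] at hs
        obtain ⟨s', hs', hsrc⟩ := hs₂
        rw [hs'] at hs
        obtain rfl : s' = s := by simpa using hs
        exact hsrc)
    exact List.reverse_injective this
  ext p
  simp only [Set.mem_setOf_eq, Set.mem_singleton_iff]
  exact ⟨fun h => key p p₀ h hp₀, fun h => h ▸ hp₀⟩

/-- finding a private-candidate edge along a chain -/
lemma find_pair (hE : Acyclic E) (hglob : ∀ v : V, muS E v ≠ 1 → muT E v = 1) :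
    ∀ (l : List V) (a b : V), (a :: b :: l).Chain' E → muS E a = 1 →
    (∀ t, (a :: b :: l).getLast? = some t → muT E t = 1) →
    ∃ x y, EdgeOn (a :: b :: l) x y ∧ muS E x = 1 ∧ muT E y = 1 := by
  intro l
  induction l with
  | nil =>
    intro a b _ ha hlast
    exact ⟨a, b, ⟨[], [], rfl⟩, ha, hlast b rfl⟩
  | cons c l' ih =>
    intro a b hch ha hlast
    by_cases hb : muS E b = 1
    · obtain ⟨x, y, ⟨l₁, l₂, hdec⟩, hx, hy⟩ := ih b c hch.tail hb
        (fun t ht => hlast t (by rw [List.getLast?_cons_cons]; exact ht))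
      exact ⟨x, y, ⟨a :: l₁, l₂, by rw [hdec]; rfl⟩, hx, hy⟩
    · exact ⟨a, b, ⟨[], c :: l', rfl⟩, ha, hglob b hb⟩

lemma exists_path_from_mem {l : List V} (hc : l.Chain' E) {v : V} (hv : v ∈ l) :
    ∃ m : List V, m.Chain' E ∧ m.head? = some v ∧ m.getLast? = l.getLast? := by
  obtain ⟨a, b, rfl⟩ := List.append_of_mem hv
  exact ⟨v :: b, hc.suffix ⟨a, rfl⟩, rfl, (List.getLast?_append_cons a v b).symm⟩

lemma exists_path_to_mem {l : List V} (hc : l.Chain' E) {v : V} (hv : v ∈ l) :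
    ∃ m : List V, m.Chain' E ∧ m.head? = l.head? ∧ m.getLast? = some v := by
  obtain ⟨a, b, rfl⟩ := List.append_of_mem hv
  refine ⟨a ++ [v], hc.prefix ⟨b, by rw [List.append_assoc]; rfl⟩, ?_,
    by rw [List.getLast?_append_of_ne_nil _ (by simp)]; rfl⟩
  cases a <;> rfl

lemma mem_muS_extend (hE : Acyclic E) {u v : V} (huv : E u v) {q : List V}
    (hq : IsPath E q ∧ (∃ s, q.head? = some s ∧ IsSource E s) ∧ q.getLast? = some u) :
    IsPath E (q ++ [v]) ∧ (∃ s, (q ++ [v]).head? = some s ∧ IsSource E s) ∧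
      (q ++ [v]).getLast? = some v := by
  obtain ⟨⟨hne, hch⟩, ⟨s, hs, hsrc⟩, hlast⟩ := hq
  refine ⟨⟨by simp, ?_⟩, ⟨s, by rw [List.head?_append_of_ne_nil _ hne]; exact hs, hsrc⟩, by simp⟩
  unfold List.Chain'; rw [List.isChain_append]
  refine ⟨hch, List.isChain_singleton v, ?_⟩
  intro x hx y hy
  rw [hlast] at hx
  simp only [Option.mem_def, Option.some.injEq, List.head?_cons] at hx hy
  subst hx; subst hy; exact huv

lemma two_le_muT_of_two_succ (hE : Acyclic E) {v w w' : V} (hw : E v w) (hw' : E v w')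
    (hne : w ≠ w') : 2 ≤ muT E v := by
  obtain ⟨r, ⟨hrne, hrch⟩, hrh, t, hrt, hsink⟩ := exists_sink_path hE w
  obtain ⟨r₁, rfl⟩ := exists_cons_of_head? hrh
  obtain ⟨r', ⟨hrne', hrch'⟩, hrh', t', hrt', hsink'⟩ := exists_sink_path hE w'
  obtain ⟨r₂, rfl⟩ := exists_cons_of_head? hrh'
  have h1 : (v :: w :: r₁) ∈ {p : List V | IsPath E p ∧ p.head? = some v ∧
      ∃ t, p.getLast? = some t ∧ IsSink E t} :=
    ⟨⟨by simp, List.isChain_cons.2 ⟨by simpa using hw, hrch⟩⟩, rfl,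
      t, by rw [List.getLast?_cons_cons]; exact hrt, hsink⟩
  have h2 : (v :: w' :: r₂) ∈ {p : List V | IsPath E p ∧ p.head? = some v ∧
      ∃ t, p.getLast? = some t ∧ IsSink E t} :=
    ⟨⟨by simp, List.isChain_cons.2 ⟨by simpa using hw', hrch'⟩⟩, rfl,
      t', by rw [List.getLast?_cons_cons]; exact hrt', hsink'⟩
  have := (Set.one_lt_ncard (muT_set_finite hE v)).2
    ⟨_, h1, _, h2, by simp [hne]⟩
  unfold muT
  omega

lemma muT_eq_one_of_funnel (hE : Acyclic E) (hF : Funnel E) {v : V}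
    (hv : muS E v ≠ 1) : muT E v = 1 := by
  by_contra hv'
  have hS : 2 ≤ muS E v := by have := muS_pos hE v; omega
  have hT : 2 ≤ muT E v := by have := muT_pos hE v; omega
  obtain ⟨q, hq, hqsrc, hqlast⟩ := exists_src_path hE v
  obtain ⟨r, ⟨hrne, hrch⟩, hrh, t, hrt, hsink⟩ := exists_sink_path hE v
  obtain ⟨r', rfl⟩ := exists_cons_of_head? hrh
  obtain ⟨hqne, hqch⟩ := hq
  -- the concatenated source-to-sink path through v
  have hpch : (q ++ r').Chain' E := by
    unfold List.Chain'; rw [List.isChain_append]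
    refine ⟨hqch, hrch.tail, ?_⟩
    intro x hx y hy
    rw [hqlast] at hx
    simp only [Option.mem_def, Option.some.injEq] at hx
    subst hx
    exact (List.isChain_cons.1 hrch).1 y hy
  have hplast : (q ++ r').getLast? = some t := by
    cases r' with
    | nil =>
      obtain rfl : v = t := by simpa using hrt
      simpa using hqlast
    | cons c r'' =>
      rw [List.getLast?_append_of_ne_nil _ (by simp)]
      rw [List.getLast?_cons_cons] at hrt
      exact hrt
  have hp : SrcSinkPath E (q ++ r') := by
    refine ⟨⟨by simp [hqne], hpch⟩, ?_, t, hplast, hsink⟩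
    obtain ⟨s, hs, hsrc⟩ := hqsrc
    exact ⟨s, by rw [List.head?_append_of_ne_nil _ hqne]; exact hs, hsrc⟩
  obtain ⟨x, y, ⟨l₁, l₂, hdec⟩, hμ⟩ := hF (q ++ r') hp
  have hxy : E x y := by
    have := hpch
    unfold List.Chain' at this; rw [hdec, List.isChain_append_cons_cons] at this
    exact this.2.1
  have hvmem : v ∈ q ++ r' := by
    obtain ⟨l, rfl⟩ := exists_concat_of_getLast? hqlast
    simp
  rw [hdec, show l₁ ++ x :: y :: l₂ = (l₁ ++ [x]) ++ (y :: l₂) from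
    (List.append_assoc l₁ [x] (y :: l₂)).symm, List.mem_append] at hvmem
  have hchdec : ((l₁ ++ [x]) ++ (y :: l₂)).Chain' E := by
    have h := hpch
    rw [hdec] at h
    rw [List.append_assoc]
    exact h
  rcases hvmem with hvm | hvm
  · -- v lies in the part up to x : path from v to x
    obtain ⟨m, hmch, hmh, hml⟩ := exists_path_from_mem (hchdec.prefix ⟨y :: l₂, rfl⟩) hvm
    rw [List.getLast?_append_of_ne_nil _ (by simp)] at hml
    simp only [List.getLast?_singleton] at hml
    have h1 : muS E v ≤ muS E x := muS_le_of_path hE hmch hmh hml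
    have h2 : muS E x ≤ muE E x y := muS_le_muE hE hxy
    omega
  · -- v lies in the part from y : path from y to v
    obtain ⟨m, hmch, hmh, hml⟩ := exists_path_to_mem (hchdec.suffix ⟨l₁ ++ [x], rfl⟩) hvm
    simp only [List.head?_cons] at hmh
    have h1 : muT E v ≤ muT E y := muT_le_of_path hE hmch hmh hml
    have h2 : muT E y ≤ muE E x y := muT_le_muE hE hxy
    omega

end Helpers

/-- Funnel iff there is a partition `V = V₁ ∪ V₂` with `G[V₁]` an out-forest,
`G[V₂]` an in-forest, and no edges from `V₂` to `V₁`. -/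
theorem stmt7 {V : Type*} [Fintype V] (E : V → V → Prop) (hE : Acyclic E)
    (hni : NoIsolated E) :
    Funnel E ↔ ∃ V₁ V₂ : Set V, V₁ ∪ V₂ = Set.univ ∧ Disjoint V₁ V₂ ∧
      (∀ v ∈ V₁, {u | u ∈ V₁ ∧ E u v}.Subsingleton) ∧
      (∀ v ∈ V₂, {w | w ∈ V₂ ∧ E v w}.Subsingleton) ∧
      ∀ u ∈ V₂, ∀ w ∈ V₁, ¬ E u w := by
  constructor
  · intro hF
    refine ⟨{v | muS E v = 1}, {v | muS E v ≠ 1}, ?_, ?_, ?_, ?_, ?_⟩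
    · ext v
      simp [em]
    · rw [Set.disjoint_left]
      intro v h1 h2
      exact h2 h1
    · -- in-neighbours of a V₁-vertex are unique
      intro v hv
      rintro u ⟨_, hu2⟩ u' ⟨_, hu'2⟩
      by_contra hne
      obtain ⟨q, hq⟩ := exists_src_path hE u
      obtain ⟨q', hq'⟩ := exists_src_path hE u'
      have h1 := mem_muS_extend hE hu2 hq
      have h2 := mem_muS_extend hE hu'2 hq'
      have hdist : q ++ [v] ≠ q' ++ [v] := by
        intro h
        have : q = q' := List.append_cancel_right h
        subst this
        rw [hq.2.2] at hq'
        exact hne (by simpa using hq'.2.2)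
      have h3 := (Set.one_lt_ncard (muS_set_finite hE v)).2
        ⟨_, h1, _, h2, hdist⟩
      have hv' : muS E v = 1 := hv
      unfold muS at hv'
      omega
    · -- out-neighbours of a V₂-vertex are unique
      intro v hv
      rintro w ⟨_, hw2⟩ w' ⟨_, hw'2⟩
      by_contra hne
      have hT2 : 2 ≤ muT E v := two_le_muT_of_two_succ hE hw2 hw'2 hne
      have hT1 : muT E v = 1 := muT_eq_one_of_funnel hE hF hv
      omega
    · intro u hu w hw huw
      have h1 : muS E u ≤ muS E w :=
        muS_le_of_path hE (r := [u, w]) (List.isChain_pair.2 huw) rfl rfl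
      have h2 : 2 ≤ muS E u := by
        have := muS_pos hE u
        have : muS E u ≠ 1 := hu
        omega
      have hw1 : muS E w = 1 := hw
      omega
  · rintro ⟨V₁, V₂, huniv, hdisj, h3, h4, h5⟩
    have hmem : ∀ v : V, v ∈ V₁ ∨ v ∈ V₂ := by
      intro v
      have : v ∈ V₁ ∪ V₂ := huniv ▸ Set.mem_univ v
      exact this
    have hcl₁ : ∀ v ∈ V₁, ∀ u, E u v → u ∈ V₁ := by
      intro v hv u huv
      rcases hmem u with h | h
      · exact h
      · exact absurd huv (h5 u h v hv)
    have claimS : ∀ v ∈ V₁, muS E v = 1 := by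
      intro v hv
      refine muS_eq_one_of_closed hE hcl₁ ?_ hv
      intro v' hv' u u' he he'
      exact h3 v' hv' ⟨hcl₁ v' hv' u he, he⟩ ⟨hcl₁ v' hv' u' he', he'⟩
    have hcl₂ : ∀ v ∈ V₂, ∀ u, E v u → u ∈ V₂ := by
      intro v hv u hvu
      rcases hmem u with h | h
      · exact absurd hvu (h5 v hv u h)
      · exact h
    have claimT : ∀ v ∈ V₂, muT E v = 1 := by
      intro v hv
      rw [muT_eq_muS_flip]
      refine muS_eq_one_of_closed (acyclic_flip hE) (W := V₂) ?_ ?_ hv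
      · intro v' hv' u huv
        exact hcl₂ v' hv' u huv
      · intro v' hv' u u' he he'
        exact h4 v' hv' ⟨hcl₂ v' hv' u he, he⟩ ⟨hcl₂ v' hv' u' he', he'⟩
    have hglob : ∀ v : V, muS E v ≠ 1 → muT E v = 1 := by
      intro v hv
      rcases hmem v with h | h
      · exact absurd (claimS v h) hv
      · exact claimT v h
    intro p hp
    obtain ⟨⟨hne, hch⟩, ⟨s, hs, hsrc⟩, t, ht, hsink⟩ := hp
    obtain ⟨rest, rfl⟩ := exists_cons_of_head? hs
    cases rest with
    | nil =>
      exfalso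
      obtain rfl : s = t := by simpa using ht
      rcases hni s with ⟨u, hu⟩ | ⟨w, hw⟩
      · exact hsrc u hu
      · exact hsink w hw
    | cons b l =>
      have hlastT : ∀ t', (s :: b :: l).getLast? = some t' → muT E t' = 1 := by
        intro t' ht'
        rw [ht] at ht'
        obtain rfl : t = t' := by simpa using ht'
        exact muT_sink hE hsink
      obtain ⟨x, y, hedge, hx, hy⟩ := find_pair hE hglob l s b hch (muS_source hE hsrc) hlastT
      exact ⟨x, y, hedge, muE_eq_one hE hx hy
        ⟨⟨hne, hch⟩, ⟨s, hs, hsrc⟩, t, ht, hsink⟩ hedge⟩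
end

section
/- A DAG G is a funnel if and only if it contains no forbidden path, i.e., no path whose first vertex has indegree at least 2 and whose last vertex has outdegree at least 2. -/
open List

section Helpers

variable {V : Type*}

private lemma head?_of_prefix' {l₁ l₂ : List V} (h : l₁ <+: l₂) (hne : l₁ ≠ []) :
    l₂.head? = l₁.head? := by
  obtain ⟨r, rfl⟩ := h
  rw [List.head?_append]
  cases hl : l₁.head? with
  | none => exact absurd (List.head?_eq_none_iff.mp hl) hne
  | some a => rfl

private lemma getLast?_of_suffix' {l₁ l₂ : List V} (h : l₁ <:+ l₂) (hne : l₁ ≠ []) :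
    l₂.getLast? = l₁.getLast? := by
  obtain ⟨r, rfl⟩ := h
  rw [List.getLast?_append]
  cases hl : l₁.getLast? with
  | none => exact absurd (List.getLast?_eq_none_iff.mp hl) hne
  | some a => rfl

private lemma exists_toSink [Finite V] (E : V → V → Prop) (hE : Acyclic E) (v : V) :
    ∃ q : List V, q.Chain' E ∧ q.head? = some v ∧ ∃ t, q.getLast? = some t ∧ IsSink E t := by
  have hwf : WellFounded (fun a b => E b a) := by
    have h1 : WellFounded (fun a b => Relation.TransGen E b a) := by
      haveI : IsTrans V (fun a b => Relation.TransGen E b a) := ⟨fun a b c h1 h2 => h2.trans h1⟩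
      haveI : IsIrrefl V (fun a b => Relation.TransGen E b a) := ⟨fun a => hE a⟩
      exact Finite.wellFounded_of_trans_of_irrefl _
    exact Subrelation.wf (fun {a b} h => Relation.TransGen.single h) h1
  induction v using WellFounded.induction hwf with
  | _ v ih =>
  by_cases hs : IsSink E v
  · exact ⟨[v], List.isChain_singleton v, rfl, v, rfl, hs⟩
  · simp only [IsSink, not_forall, not_not] at hs
    obtain ⟨w, hw⟩ := hs
    obtain ⟨q, hq, hqh, t, hqt, hts⟩ := ih w hw
    have hqne : q ≠ [] := by rintro rfl; simp at hqh
    refine ⟨v :: q, ?_, rfl, t, ?_, hts⟩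
    · show List.IsChain E _
      rw [List.isChain_cons]
      refine ⟨fun x hx => ?_, hq⟩
      rw [hqh] at hx
      obtain rfl : x = w := by symm; simpa using hx
      exact hw
    · rw [show v :: q = [v] ++ q from rfl, List.getLast?_append, hqt]
      rfl

private lemma exists_toSource [Finite V] (E : V → V → Prop) (hE : Acyclic E) (v : V) :
    ∃ q : List V, q.Chain' E ∧ q.getLast? = some v ∧ ∃ s, q.head? = some s ∧ IsSource E s := by
  have hE' : Acyclic (fun a b => E b a) := by
    intro x hx
    exact hE x (Relation.transGen_swap.mp hx)
  obtain ⟨q, hq, hqh, t, hqt, hts⟩ := exists_toSink (fun a b => E b a) hE' v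
  refine ⟨q.reverse, List.isChain_reverse.mpr hq, ?_, t, ?_, hts⟩
  · rw [List.getLast?_reverse, hqh]
  · rw [List.head?_reverse, hqt]

private lemma unique_to_last (E : V → V → Prop) :
    ∀ (n : ℕ) (P q : List V), P.length ≤ n → P.Chain' E → q.Chain' E → P ≠ [] → q ≠ [] →
    P.getLast? = q.getLast? →
    (∀ s, P.head? = some s → IsSource E s) → (∀ s, q.head? = some s → IsSource E s) →
    (∀ x ∈ P, ∀ a b, E a x → E b x → a = b) → P = q := by
  intro n
  induction n with
  | zero =>
    intro P q hl _ _ hP _ _ _ _ _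
    exact absurd (List.length_eq_zero_iff.mp (Nat.le_zero.mp hl)) hP
  | succ n ih =>
    intro P q hl hcP hcq hP hq hlast hsP hsq huniq
    obtain ⟨r, u, rfl⟩ : ∃ r u, P = r ++ [u] := by
      rcases List.eq_nil_or_concat P with h | ⟨r, u, h⟩
      · exact absurd h hP
      · exact ⟨r, u, by simpa using h⟩
    obtain ⟨s, w, rfl⟩ : ∃ s w, q = s ++ [w] := by
      rcases List.eq_nil_or_concat q with h | ⟨s, w, h⟩
      · exact absurd h hq
      · exact ⟨s, w, by simpa using h⟩
    rw [List.getLast?_concat, List.getLast?_concat] at hlast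
    obtain rfl : w = u := by symm; injection hlast
    rcases eq_or_ne r [] with rfl | hr
    · have hu : IsSource E w := hsP w (by simp)
      rcases eq_or_ne s [] with rfl | hs
      · rfl
      · have hy : s.getLast? = some (s.getLast hs) := List.getLast?_eq_getLast hs
        have : E (s.getLast hs) w :=
          (List.isChain_append.mp hcq).2.2 _ hy w rfl
        exact absurd this (hu _)
    · have hx0 : r.getLast? = some (r.getLast hr) := List.getLast?_eq_getLast hr
      have ex0 : E (r.getLast hr) w := (List.isChain_append.mp hcP).2.2 _ hx0 w rfl
      rcases eq_or_ne s [] with rfl | hs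
      · have hu : IsSource E w := hsq w (by simp)
        exact absurd ex0 (hu _)
      · have hy0 : s.getLast? = some (s.getLast hs) := List.getLast?_eq_getLast hs
        have ey0 : E (s.getLast hs) w := (List.isChain_append.mp hcq).2.2 _ hy0 w rfl
        have hxy : r.getLast hr = s.getLast hs := huniq w (by simp) _ _ ex0 ey0
        have hrs : r = s := by
          refine ih r s ?_ (List.IsChain.prefix hcP (List.prefix_append r [w]))
            (List.IsChain.prefix hcq (List.prefix_append s [w])) hr hs ?_ ?_ ?_ ?_
          · have := hl
            simp only [List.length_append, List.length_singleton] at this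
            omega
          · rw [hx0, hy0, hxy]
          · intro s' h'
            exact hsP s' (by rw [head?_of_prefix' (List.prefix_append r [w]) hr]; exact h')
          · intro s' h'
            exact hsq s' (by rw [head?_of_prefix' (List.prefix_append s [w]) hs]; exact h')
          · exact fun x hx => huniq x (List.mem_append_left _ hx)
        rw [hrs]

private lemma unique_from_head (E : V → V → Prop) (Q q : List V) (hcQ : Q.Chain' E)
    (hcq : q.Chain' E) (hQ : Q ≠ []) (hq : q ≠ []) (hhead : Q.head? = q.head?)
    (htQ : ∀ t, Q.getLast? = some t → IsSink E t) (htq : ∀ t, q.getLast? = some t → IsSink E t)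
    (huniq : ∀ x ∈ Q, ∀ a b, E x a → E x b → a = b) : Q = q := by
  have h := unique_to_last (fun a b => E b a) Q.reverse.length Q.reverse q.reverse le_rfl
    (List.isChain_reverse.mpr hcQ) (List.isChain_reverse.mpr hcq)
    (by simpa using hQ) (by simpa using hq)
    (by rw [List.getLast?_reverse, List.getLast?_reverse, hhead])
    (by intro s hsx; rw [List.head?_reverse] at hsx; exact htQ s hsx)
    (by intro s hsx; rw [List.head?_reverse] at hsx; exact htq s hsx)
    (by intro x hx a b h1 h2; exact huniq x (List.mem_reverse.mp hx) a b h1 h2)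
  exact List.reverse_injective h

private lemma srcSink_glue (E : V → V → Prop) {S p T : List V} {a h t c : V}
    (hS : S.Chain' E) (hp : p.Chain' E) (hT : T.Chain' E)
    (hsrc : ∃ s, S.head? = some s ∧ IsSource E s)
    (hsink : ∃ t', T.getLast? = some t' ∧ IsSink E t')
    (hSa : S.getLast? = some a) (hph : p.head? = some h)
    (hpt : p.getLast? = some t) (hTc : T.head? = some c)
    (e1 : E a h) (e2 : E t c) : SrcSinkPath E (S ++ p ++ T) := by
  have hSne : S ≠ [] := fun hh => by simp [hh] at hSa
  have hpne : p ≠ [] := fun hh => by simp [hh] at hph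
  have hTne : T ≠ [] := fun hh => by simp [hh] at hTc
  have hSp : (S ++ p).Chain' E := by
    show List.IsChain E _
    rw [List.isChain_append]
    refine ⟨hS, hp, fun x hx y hy => ?_⟩
    rw [hSa] at hx; rw [hph] at hy
    obtain rfl : x = a := by symm; simpa using hx
    obtain rfl : y = h := by symm; simpa using hy
    exact e1
  have hc : ((S ++ p) ++ T).Chain' E := by
    show List.IsChain E _
    rw [List.isChain_append]
    refine ⟨hSp, hT, fun x hx y hy => ?_⟩
    rw [List.getLast?_append, hpt] at hx
    rw [hTc] at hy
    obtain rfl : x = t := by symm; simpa using hx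
    obtain rfl : y = c := by symm; simpa using hy
    exact e2
  obtain ⟨s0, hs1, hs2⟩ := hsrc
  obtain ⟨t0, ht1, ht2⟩ := hsink
  refine ⟨⟨by simp [hSne], hc⟩, ⟨s0, ?_, hs2⟩, ⟨t0, ?_, ht2⟩⟩
  · rw [List.append_assoc, List.head?_append, hs1]; rfl
  · rw [List.getLast?_append, ht1]; rfl

private lemma head?_dropWhile_false {cb : V → Bool} {l : List V} {x : V}
    (h : (l.dropWhile cb).head? = some x) : cb x = false := by
  induction l with
  | nil => simp at h
  | cons a l ih =>
    rw [List.dropWhile_cons] at h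
    by_cases hca : cb a = true
    · rw [if_pos hca] at h; exact ih h
    · rw [if_neg hca] at h
      obtain rfl : a = x := by simpa using h
      exact Bool.eq_false_iff.mpr hca

end Helpers

/-- Funnel iff no forbidden path: no path whose first vertex has indegree ≥ 2
and whose last vertex has outdegree ≥ 2. -/
theorem stmt8 {V : Type*} [Fintype V] (E : V → V → Prop) (hE : Acyclic E)
    (hni : NoIsolated E) :
    Funnel E ↔ ¬ ∃ p : List V, IsPath E p ∧
      (∃ h, p.head? = some h ∧ ∃ a b, a ≠ b ∧ E a h ∧ E b h) ∧
      (∃ t, p.getLast? = some t ∧ ∃ c d, c ≠ d ∧ E t c ∧ E t d) := by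

  constructor
  · -- Funnel → no forbidden path
    intro hF
    rintro ⟨p, ⟨hpne, hpc⟩, ⟨h, hph, a, b, hab, hEa, hEb⟩, ⟨t, hpt, c, d, hcd, hEc, hEd⟩⟩
    obtain ⟨Sa, hSac, hSaL, sa, hSah, hsa⟩ := exists_toSource E hE a
    obtain ⟨Sb, hSbc, hSbL, sb, hSbh, hsb⟩ := exists_toSource E hE b
    obtain ⟨Tc, hTcc, hTch, tc, hTcL, htc⟩ := exists_toSink E hE c
    obtain ⟨Td, hTdc, hTdh, td, hTdL, htd⟩ := exists_toSink E hE d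
    have hq1 : SrcSinkPath E (Sa ++ p ++ Tc) :=
      srcSink_glue E hSac hpc hTcc ⟨sa, hSah, hsa⟩ ⟨tc, hTcL, htc⟩ hSaL hph hpt hTch hEa hEc
    have hq2 : SrcSinkPath E (Sb ++ p ++ Tc) :=
      srcSink_glue E hSbc hpc hTcc ⟨sb, hSbh, hsb⟩ ⟨tc, hTcL, htc⟩ hSbL hph hpt hTch hEb hEc
    have hq3 : SrcSinkPath E (Sa ++ p ++ Td) :=
      srcSink_glue E hSac hpc hTdc ⟨sa, hSah, hsa⟩ ⟨td, hTdL, htd⟩ hSaL hph hpt hTdh hEa hEd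
    obtain ⟨u, v, ⟨l₁, l₂, hdec⟩, hmu⟩ := hF _ hq1
    unfold muE at hmu
    obtain ⟨w, hw⟩ := Set.ncard_eq_one.mp hmu
    have hq1w : Sa ++ p ++ Tc = w := by
      have hmem : (Sa ++ p ++ Tc) ∈ {q : List V | SrcSinkPath E q ∧ EdgeOn q u v} :=
        ⟨hq1, l₁, l₂, hdec⟩
      rw [hw] at hmem; exact hmem
    by_cases hcase : l₁.length + 2 ≤ (Sa ++ p).length
    · have hpre1 : l₁ ++ [u, v] <+: Sa ++ p ++ Tc := ⟨l₂, by rw [hdec]; simp⟩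
      have hpre2 : Sa ++ p <+: Sa ++ p ++ Tc := List.prefix_append _ _
      have hpre3 : l₁ ++ [u, v] <+: Sa ++ p :=
        List.prefix_of_prefix_length_le hpre1 hpre2 (by simpa using hcase)
      obtain ⟨r, hr⟩ := hpre3
      have hedge3 : EdgeOn (Sa ++ p ++ Td) u v := ⟨l₁, r ++ Td, by rw [← hr]; simp⟩
      have hq3w : Sa ++ p ++ Td = w := by
        have hmem : (Sa ++ p ++ Td) ∈ {q : List V | SrcSinkPath E q ∧ EdgeOn q u v} :=
          ⟨hq3, hedge3⟩
        rw [hw] at hmem; exact hmem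
      have hTT : Tc = Td := List.append_cancel_left (hq1w.trans hq3w.symm)
      rw [hTT, hTdh] at hTch
      exact hcd (Option.some.inj hTch).symm
    · have hsuf1 : u :: v :: l₂ <:+ Sa ++ p ++ Tc := ⟨l₁, hdec.symm⟩
      have hsuf2 : p ++ Tc <:+ Sa ++ p ++ Tc := ⟨Sa, by simp⟩
      have hlen : (u :: v :: l₂).length ≤ (p ++ Tc).length := by
        have h1 := congrArg List.length hdec
        have h2 : 1 ≤ p.length := List.length_pos_iff.mpr hpne
        simp only [List.length_append, List.length_cons] at h1 ⊢
        simp only [List.length_append, not_le] at hcase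
        omega
      obtain ⟨r, hr⟩ := List.suffix_of_suffix_length_le hsuf1 hsuf2 hlen
      have hedge2 : EdgeOn (Sb ++ p ++ Tc) u v :=
        ⟨Sb ++ r, l₂, by rw [List.append_assoc, ← hr]; simp⟩
      have hq2w : Sb ++ p ++ Tc = w := by
        have hmem : (Sb ++ p ++ Tc) ∈ {q : List V | SrcSinkPath E q ∧ EdgeOn q u v} :=
          ⟨hq2, hedge2⟩
        rw [hw] at hmem; exact hmem
      have hSS : Sa = Sb := by
        have heq : Sa ++ (p ++ Tc) = Sb ++ (p ++ Tc) := by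
          rw [← List.append_assoc, ← List.append_assoc, hq1w, hq2w]
        exact List.append_cancel_right heq
      rw [hSS, hSbL] at hSaL
      exact hab (Option.some.inj hSaL.symm)

  · -- no forbidden path → Funnel
    intro hNF p hp
    obtain ⟨⟨hpne, hpc⟩, ⟨s, hps, hs⟩, ⟨t, hpt, ht⟩⟩ := hp
    have hlen2 : 2 ≤ p.length := by
      by_contra hlt
      have h0 : p.length ≠ 0 := fun hc => hpne (List.length_eq_zero_iff.mp hc)
      have h1 : p.length = 1 := by omega
      obtain ⟨x, rfl⟩ := List.length_eq_one_iff.mp h1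
      have hsx : s = x := by simpa using hps.symm
      have htx : t = x := by simpa using hpt.symm
      rcases hni x with ⟨uu, huu⟩ | ⟨ww, hww⟩
      · exact absurd huu ((hsx ▸ hs) uu)
      · exact absurd hww ((htx ▸ ht) ww)
    classical
    set cb : V → Bool := fun x => decide (∀ a b, E a x → E b x → a = b) with hcb
    have key : ∃ P Q : List V, p = P ++ Q ∧ P ≠ [] ∧ Q ≠ [] ∧
        (∀ x ∈ P, ∀ a b, E a x → E b x → a = b) ∧
        (∀ x ∈ Q, ∀ c d, E x c → E x d → c = d) := by
      by_cases hd : p.dropWhile cb = []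
      · refine ⟨p.dropLast, [p.getLast hpne], (List.dropLast_concat_getLast hpne).symm,
          ?_, by simp, ?_, ?_⟩
        · have hld := (List.length_dropLast (xs := p))
          intro hc
          rw [hc] at hld
          simp at hld
          omega
        · intro x hx a b h1 h2
          have hxtw : x ∈ p.takeWhile cb := by
            have hta : p.takeWhile cb = p := by
              have := (List.takeWhile_append_dropWhile : p.takeWhile cb ++ p.dropWhile cb = p)
              rwa [hd, List.append_nil] at this
            rw [hta]
            exact (List.dropLast_sublist p).subset hx
          have hdec := List.mem_takeWhile_imp hxtw
          simp only [hcb, decide_eq_true_eq] at hdec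
          exact hdec a b h1 h2
        · intro x hx c' d' h1 h2
          obtain rfl : x = p.getLast hpne := by simpa using hx
          have : t = p.getLast hpne := by
            rw [List.getLast?_eq_getLast hpne] at hpt
            exact (Option.some.inj hpt).symm
          exact absurd h1 (this ▸ ht c')
      · refine ⟨p.takeWhile cb, p.dropWhile cb, ((List.takeWhile_append_dropWhile : p.takeWhile cb ++ p.dropWhile cb = p)).symm,
          ?_, hd, ?_, ?_⟩
        · cases hp' : p with
          | nil => exact absurd hp' hpne
          | cons x xs =>
            have hsx : s = x := by rw [hp'] at hps; simpa using hps.symm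
            have hcbx : cb x = true := by
              simp only [hcb, decide_eq_true_eq]
              intro a b h1 h2
              exact absurd h1 (hsx ▸ hs a)
            rw [List.takeWhile_cons, hcbx]
            simp
        · intro x hx a b h1 h2
          have hdec := List.mem_takeWhile_imp hx
          simp only [hcb, decide_eq_true_eq] at hdec
          exact hdec a b h1 h2
        · intro x hx c' d' h1 h2
          by_contra hne
          obtain ⟨pre, suf, hQ⟩ := List.append_of_mem hx
          have hpref : pre ++ [x] <+: p.dropWhile cb := ⟨suf, by rw [hQ]; simp⟩
          have htc : (pre ++ [x]).Chain' E :=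
            List.IsChain.prefix (List.IsChain.suffix hpc (List.dropWhile_suffix cb)) hpref
          have hQh : (p.dropWhile cb).head? = some ((p.dropWhile cb).head hd) :=
            List.head?_eq_head hd
          have hhd : (pre ++ [x]).head? = some ((p.dropWhile cb).head hd) := by
            rw [← (head?_of_prefix' hpref (by simp)), hQh]
          have hcbh : cb ((p.dropWhile cb).head hd) = false :=
            head?_dropWhile_false hQh
          have hnotall : ¬ (∀ a b, E a ((p.dropWhile cb).head hd) →
              E b ((p.dropWhile cb).head hd) → a = b) := by
            simp only [hcb, decide_eq_false_iff_not] at hcbh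
            exact hcbh
          push_neg at hnotall
          obtain ⟨a, b, hEa, hEb, hab⟩ := hnotall
          exact hNF ⟨pre ++ [x], ⟨by simp, htc⟩,
            ⟨(p.dropWhile cb).head hd, hhd, a, b, hab, hEa, hEb⟩,
            ⟨x, List.getLast?_concat, c', d', hne, h1, h2⟩⟩
    obtain ⟨P, Q, hPQ, hPne, hQne, hPin, hQout⟩ := key
    have hpc' : (P ++ Q).Chain' E := hPQ ▸ hpc
    obtain ⟨u, hPu⟩ : ∃ u, P.getLast? = some u := ⟨_, List.getLast?_eq_getLast hPne⟩
    obtain ⟨v, hQv⟩ : ∃ v, Q.head? = some v := ⟨_, List.head?_eq_head hQne⟩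
    have hEuv : E u v := (List.isChain_append.mp hpc').2.2 u hPu v hQv
    have huP : P.dropLast ++ [u] = P := by
      have hgl := List.dropLast_concat_getLast hPne
      have : P.getLast hPne = u := by
        rw [List.getLast?_eq_getLast hPne] at hPu
        exact Option.some.inj hPu
      rwa [this] at hgl
    have hvQ : v :: Q.tail = Q := by
      have hgl := List.cons_head_tail hQne
      have : Q.head hQne = v := by
        rw [List.head?_eq_head hQne] at hQv
        exact Option.some.inj hQv
      rwa [this] at hgl
    have hsplit : p = P.dropLast ++ u :: v :: Q.tail := by
      rw [hPQ]
      conv_lhs => rw [← huP, ← hvQ]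
      rw [List.append_assoc]
      rfl
    have hset : {q : List V | SrcSinkPath E q ∧ EdgeOn q u v} = {p} := by
      ext q
      simp only [Set.mem_setOf_eq, Set.mem_singleton_iff]
      constructor
      · rintro ⟨⟨⟨hqne, hqc⟩, ⟨s', hqs, hs'⟩, ⟨t', hqt, ht'⟩⟩, l₁, l₂, rfl⟩
        have hApre : l₁ ++ [u] <+: l₁ ++ u :: v :: l₂ := ⟨v :: l₂, by simp⟩
        have hBsuf : v :: l₂ <:+ l₁ ++ u :: v :: l₂ := ⟨l₁ ++ [u], by simp⟩
        have hAP : P = l₁ ++ [u] := by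
          refine unique_to_last E P.length P (l₁ ++ [u]) le_rfl
            (List.IsChain.prefix hpc' ⟨Q, rfl⟩) (List.IsChain.prefix hqc hApre) hPne (by simp) ?_ ?_ ?_ hPin
          · rw [hPu, List.getLast?_concat]
          · intro s0 hs0
            have hh : p.head? = P.head? := head?_of_prefix' ⟨Q, hPQ.symm⟩ hPne
            rw [← hh, hps] at hs0
            exact (Option.some.inj hs0) ▸ hs
          · intro s0 hs0
            have hh : (l₁ ++ u :: v :: l₂).head? = (l₁ ++ [u]).head? :=
              head?_of_prefix' hApre (by simp)
            rw [← hh, hqs] at hs0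
            exact (Option.some.inj hs0) ▸ hs'
        have hBQ : Q = v :: l₂ := by
          refine unique_from_head E Q (v :: l₂) (List.IsChain.suffix hpc' ⟨P, rfl⟩) (List.IsChain.suffix hqc hBsuf)
            hQne (by simp) ?_ ?_ ?_ hQout
          · rw [hQv]; rfl
          · intro t0 ht0
            have hh : p.getLast? = Q.getLast? := getLast?_of_suffix' ⟨P, hPQ.symm⟩ hQne
            rw [← hh, hpt] at ht0
            exact (Option.some.inj ht0) ▸ ht
          · intro t0 ht0
            have hh : (l₁ ++ u :: v :: l₂).getLast? = (v :: l₂).getLast? :=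
              getLast?_of_suffix' hBsuf (by simp)
            rw [← hh, hqt] at ht0
            exact (Option.some.inj ht0) ▸ ht'
        rw [hPQ, hAP, hBQ]
        simp
      · rintro rfl
        exact ⟨⟨⟨hpne, hpc⟩, ⟨s, hps, hs⟩, ⟨t, hpt, ht⟩⟩, P.dropLast, Q.tail, hsplit⟩
    refine ⟨u, v, ⟨P.dropLast, Q.tail, hsplit⟩, ?_⟩
    unfold muE
    rw [hset, Set.ncard_singleton]
end

section
/- For every k > 1 there exists a DAG that is in ST_k (every vertex v has μ_s(v) ≤ k or μ_t(v) ≤ k) but is not a k-funnel; hence the inclusion of k-funnels in ST_k is strict for k > 1. -/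
open List

section Construction

/-- The witness graph: sources `0..k-1` point to `a = k+1`; extra source `s0 = k`
points to `b = k+2`; `a → b`; `a → t0 = k+3`; `b` points to sinks `k+4..2k+3`. -/
def EG (k : ℕ) (u v : Fin (2*k+4)) : Prop :=
  (u.val < k ∧ v.val = k+1) ∨ (u.val = k ∧ v.val = k+2) ∨ (u.val = k+1 ∧ v.val = k+2) ∨
  (u.val = k+1 ∧ v.val = k+3) ∨ (u.val = k+2 ∧ k+4 ≤ v.val)

def rk (k : ℕ) (v : Fin (2*k+4)) : ℕ :=
  if v.val ≤ k then 0 else if v.val = k+1 then 1 else if v.val = k+2 then 2 else 3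

lemma rk_lt {k : ℕ} {u v : Fin (2*k+4)} (h : EG k u v) : rk k u < rk k v := by
  obtain ⟨h1,h2⟩|⟨h1,h2⟩|⟨h1,h2⟩|⟨h1,h2⟩|⟨h1,h2⟩ := h <;> unfold rk <;> split_ifs <;> omega

lemma rk_le3 {k : ℕ} (v : Fin (2*k+4)) : rk k v ≤ 3 := by unfold rk; split_ifs <;> omega

def vA (k : ℕ) : Fin (2*k+4) := ⟨k+1, by omega⟩
def vB (k : ℕ) : Fin (2*k+4) := ⟨k+2, by omega⟩
def vT0 (k : ℕ) : Fin (2*k+4) := ⟨k+3, by omega⟩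
def vS0 (k : ℕ) : Fin (2*k+4) := ⟨k, by omega⟩
def vsrc (k : ℕ) (i : Fin k) : Fin (2*k+4) := ⟨i.val, by omega⟩
def vsnk (k : ℕ) (j : Fin k) : Fin (2*k+4) := ⟨k+4+j.val, by omega⟩

lemma e_src_A {k : ℕ} (i : Fin k) : EG k (vsrc k i) (vA k) := Or.inl ⟨i.2, rfl⟩
lemma e_S0_B {k : ℕ} : EG k (vS0 k) (vB k) := Or.inr (Or.inl ⟨rfl, rfl⟩)
lemma e_A_B {k : ℕ} : EG k (vA k) (vB k) := Or.inr (Or.inr (Or.inl ⟨rfl, rfl⟩))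
lemma e_A_T0 {k : ℕ} : EG k (vA k) (vT0 k) := Or.inr (Or.inr (Or.inr (Or.inl ⟨rfl, rfl⟩)))
lemma e_B_snk {k : ℕ} (j : Fin k) : EG k (vB k) (vsnk k j) :=
  Or.inr (Or.inr (Or.inr (Or.inr ⟨rfl, by simp [vsnk]⟩)))

lemma last_decomp {V : Type*} {E : V → V → Prop} (p : List V) (v : V) (hc : p.Chain' E)
    (hl : p.getLast? = some v) :
    p = [v] ∨ ∃ q u, p = q ++ [u, v] ∧ (q ++ [u]).Chain' E ∧
      (q ++ [u]).getLast? = some u ∧ E u v := by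
  rcases p.eq_nil_or_concat with rfl | ⟨q', w, rfl⟩
  · simp at hl
  · rw [List.concat_eq_append] at hc hl ⊢
    rw [List.getLast?_concat] at hl
    have hwv : w = v := by injection hl
    subst hwv
    rcases q'.eq_nil_or_concat with rfl | ⟨r, u, rfl⟩
    · left; rfl
    · right
      rw [List.concat_eq_append] at hc ⊢
      refine ⟨r, u, by simp, ?_, List.getLast?_concat, ?_⟩
      · exact (List.isChain_append.mp hc).1
      · have h3 := (List.isChain_append.mp hc).2.2
        exact h3 u List.getLast?_concat _ rfl

lemma low_source {k : ℕ} (v : Fin (2*k+4)) (h : v.val ≤ k) : ∀ u, ¬ EG k u v := by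
  intro u hu
  obtain ⟨h1,h2⟩|⟨h1,h2⟩|⟨h1,h2⟩|⟨h1,h2⟩|⟨h1,h2⟩ := hu <;> omega

lemma high_sink {k : ℕ} (v : Fin (2*k+4)) (h : k+3 ≤ v.val) : ∀ w, ¬ EG k v w := by
  intro w hw
  obtain ⟨h1,h2⟩|⟨h1,h2⟩|⟨h1,h2⟩|⟨h1,h2⟩|⟨h1,h2⟩ := hw <;> omega

lemma path_to_source {k : ℕ} (p : List (Fin (2*k+4))) (v : Fin (2*k+4)) (hv : v.val ≤ k)
    (hc : p.Chain' (EG k)) (hl : p.getLast? = some v) : p = [v] := by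
  rcases last_decomp p v hc hl with h | ⟨q, u, _, _, _, he⟩
  · exact h
  · exact absurd he (low_source v hv u)

lemma path_to_A {k : ℕ} (hk : 0 < k) (p : List (Fin (2*k+4))) (v : Fin (2*k+4))
    (hv : v.val = k+1) (hc : p.Chain' (EG k)) (hl : p.getLast? = some v)
    (hs : ∃ s, p.head? = some s ∧ ∀ u, ¬ EG k u s) :
    ∃ u, u.val < k ∧ p = [u, v] := by
  rcases last_decomp p v hc hl with rfl | ⟨q, u, hp, hc', hl', he⟩
  · obtain ⟨s, hs1, hs2⟩ := hs
    simp at hs1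
    subst hs1
    exact absurd (show EG k ⟨0, by omega⟩ v from Or.inl ⟨by simpa using hk, hv⟩) (hs2 _)
  · have hu : u.val < k := by
      obtain ⟨h1,h2⟩|⟨h1,h2⟩|⟨h1,h2⟩|⟨h1,h2⟩|⟨h1,h2⟩ := he <;> omega
    have : q ++ [u] = [u] := path_to_source _ u (le_of_lt hu) hc' hl'
    have hq : q = [] := by
      have := congrArg List.length this
      simp at this
      exact this
    subst hq
    exact ⟨u, hu, by simpa using hp⟩

lemma path_from_sink {k : ℕ} (p : List (Fin (2*k+4))) (v : Fin (2*k+4)) (hv : k+3 ≤ v.val)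
    (hc : p.Chain' (EG k)) (hh : p.head? = some v) : p = [v] := by
  match p with
  | [] => simp at hh
  | [a] => simp at hh; rw [hh]
  | a :: b :: l =>
    simp at hh
    subst hh
    exact absurd (List.isChain_cons_cons.mp hc).1 (high_sink a hv b)

lemma path_from_B {k : ℕ} (hk : 0 < k) (p : List (Fin (2*k+4))) (v : Fin (2*k+4))
    (hv : v.val = k+2) (hc : p.Chain' (EG k)) (hh : p.head? = some v)
    (ht : ∃ t, p.getLast? = some t ∧ ∀ w, ¬ EG k t w) :
    ∃ w, k+4 ≤ w.val ∧ p = [v, w] := by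
  match p with
  | [] => simp at hh
  | [a] =>
    simp at hh; subst hh
    obtain ⟨t, ht1, ht2⟩ := ht
    simp at ht1; subst ht1
    exact absurd (show EG k a ⟨k+4, by omega⟩ from
      Or.inr (Or.inr (Or.inr (Or.inr ⟨hv, by simp⟩)))) (ht2 _)
  | a :: b :: l =>
    simp at hh; subst hh
    have he := (List.isChain_cons_cons.mp hc).1
    have hb : k+4 ≤ b.val := by
      obtain ⟨h1,h2⟩|⟨h1,h2⟩|⟨h1,h2⟩|⟨h1,h2⟩|⟨h1,h2⟩ := he <;> omega
    have : b :: l = [b] := path_from_sink _ b (by omega) (List.isChain_cons_cons.mp hc).2 rfl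
    have hl0 : l = [] := by injection this
    subst hl0
    exact ⟨b, hb, rfl⟩

lemma path_len {k : ℕ} {p : List (Fin (2*k+4))} (hc : p.Chain' (EG k)) : p.length ≤ 4 := by
  have h1 : (p.map (rk k)).Chain' (· < ·) := by
    show List.IsChain _ _
    rw [List.isChain_map]
    exact hc.imp (fun _ _ h => rk_lt h)
  have h2 : (p.map (rk k)).Pairwise (· < ·) := List.isChain_iff_pairwise.mp h1
  have h3 : (p.map (rk k)).Nodup := h2.imp (fun h => Nat.ne_of_lt h)
  have h4 : (p.map (rk k)).toFinset ⊆ Finset.range 4 := by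
    intro x hx
    simp only [List.mem_toFinset, List.mem_map] at hx
    obtain ⟨v, _, rfl⟩ := hx
    simp only [Finset.mem_range]
    have := rk_le3 (k := k) v
    omega
  have h5 : (p.map (rk k)).length ≤ 4 := by
    rw [← List.toFinset_card_of_nodup h3]
    simpa using Finset.card_le_card h4
  simpa using h5

lemma ncard_range_fin {β : Type*} {m : ℕ} (f : Fin m → β) (hf : Function.Injective f) :
    (Set.range f).ncard = m := by
  rw [← Nat.card_coe_set_eq, Nat.card_range_of_injective hf, Nat.card_eq_fintype_card,
    Fintype.card_fin]

lemma card_lb {β : Type*} {m : ℕ} (S : Set β) (f : Fin m → β) (hf : Function.Injective f)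
    (hr : Set.range f ⊆ S) (hS : S.Finite) : m ≤ S.ncard := by
  calc m = (Set.range f).ncard := (ncard_range_fin f hf).symm
    _ ≤ S.ncard := Set.ncard_le_ncard hr hS

lemma low_set_ncard {k : ℕ} : {u : Fin (2*k+4) | u.val < k}.ncard = k := by
  have : {u : Fin (2*k+4) | u.val < k} = Set.range (fun i : Fin k => vsrc k i) := by
    ext u
    constructor
    · intro h
      exact ⟨⟨u.val, h⟩, Fin.ext rfl⟩
    · rintro ⟨i, rfl⟩
      exact i.2
  rw [this]
  exact ncard_range_fin _ (fun i j h => Fin.ext (by simpa [vsrc, Fin.ext_iff] using h))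

lemma high_set_ncard {k : ℕ} : {u : Fin (2*k+4) | k+4 ≤ u.val}.ncard = k := by
  have : {u : Fin (2*k+4) | k+4 ≤ u.val} = Set.range (fun i : Fin k => vsnk k i) := by
    ext u
    constructor
    · intro h
      replace h : k+4 ≤ u.val := h
      refine ⟨⟨u.val - (k+4), by have := u.2; omega⟩, Fin.ext ?_⟩
      simp only [vsnk]
      omega
    · rintro ⟨i, rfl⟩
      simp [vsnk]
  rw [this]
  exact ncard_range_fin _ (fun i j h => Fin.ext (by simpa [vsnk, Fin.ext_iff] using h))

lemma ssp4 {k : ℕ} (i j : Fin k) :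
    SrcSinkPath (EG k) [vsrc k i, vA k, vB k, vsnk k j] := by
  refine ⟨⟨by simp, ?_⟩, ⟨vsrc k i, rfl, low_source _ (le_of_lt i.2)⟩,
    ⟨vsnk k j, by simp, high_sink _ (by simp only [vsnk]; omega)⟩⟩
  exact List.isChain_cons_cons.mpr ⟨e_src_A i, List.isChain_cons_cons.mpr ⟨e_A_B,
    List.isChain_cons_cons.mpr ⟨e_B_snk j, List.isChain_singleton _⟩⟩⟩

lemma ssp3a {k : ℕ} (i : Fin k) :
    SrcSinkPath (EG k) [vsrc k i, vA k, vT0 k] := by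
  refine ⟨⟨by simp, ?_⟩, ⟨vsrc k i, rfl, low_source _ (le_of_lt i.2)⟩,
    ⟨vT0 k, by simp, high_sink _ (by simp [vT0])⟩⟩
  exact List.isChain_cons_cons.mpr ⟨e_src_A i, List.isChain_cons_cons.mpr ⟨e_A_T0, List.isChain_singleton _⟩⟩

lemma ssp3b {k : ℕ} (j : Fin k) :
    SrcSinkPath (EG k) [vS0 k, vB k, vsnk k j] := by
  refine ⟨⟨by simp, ?_⟩, ⟨vS0 k, rfl, low_source _ (by simp [vS0])⟩,
    ⟨vsnk k j, by simp, high_sink _ (by simp only [vsnk]; omega)⟩⟩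
  exact List.isChain_cons_cons.mpr ⟨e_S0_B, List.isChain_cons_cons.mpr ⟨e_B_snk j, List.isChain_singleton _⟩⟩

lemma muE_fin {k : ℕ} (u v : Fin (2*k+4)) :
    {p | SrcSinkPath (EG k) p ∧ EdgeOn p u v}.Finite :=
  (List.finite_length_le (Fin (2*k+4)) 4).subset (fun _ hp => path_len hp.1.1.2)

end Construction

section Bounds

lemma lb_srcA {k : ℕ} (hk : 1 < k) (i : Fin k) :
    k + 1 ≤ muE (EG k) (vsrc k i) (vA k) := by
  unfold muE
  apply card_lb _ (fun j : Fin (k+1) =>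
    if h : j.val < k then [vsrc k i, vA k, vB k, vsnk k ⟨j.val, h⟩] else [vsrc k i, vA k, vT0 k])
  · intro j j' h
    by_cases hj : j.val < k <;> by_cases hj' : j'.val < k <;>
      simp only [hj, hj', dif_pos, dif_neg, not_false_iff] at h <;>
      [skip; skip; skip; skip] <;>
      first
        | (simp [vsnk, vT0, vB, Fin.ext_iff, List.cons.injEq] at h; exact Fin.ext (by omega))
        | (simp [vsnk, vT0, vB, Fin.ext_iff, List.cons.injEq] at h)
        | (exact Fin.ext (by omega))
  · rintro _ ⟨j, rfl⟩
    by_cases h : j.val < k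
    · simp only [dif_pos h]
      exact ⟨ssp4 i ⟨j.val, h⟩, [], [vB k, vsnk k ⟨j.val, h⟩], rfl⟩
    · simp only [dif_neg h]
      exact ⟨ssp3a i, [], [vT0 k], rfl⟩
  · exact muE_fin _ _

lemma lb_AB {k : ℕ} (hk : 1 < k) : k + 1 ≤ muE (EG k) (vA k) (vB k) := by
  have hk0 : 0 < k := by omega
  unfold muE
  apply card_lb _ (fun j : Fin (k+1) =>
    if h : j.val < k then [vsrc k ⟨0, hk0⟩, vA k, vB k, vsnk k ⟨j.val, h⟩]
    else [vsrc k ⟨1, hk⟩, vA k, vB k, vsnk k ⟨0, hk0⟩])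
  · intro j j' h
    by_cases hj : j.val < k <;> by_cases hj' : j'.val < k <;>
      simp only [hj, hj', dif_pos, dif_neg, not_false_iff] at h <;>
      first
        | (simp only [vsrc, vsnk, Fin.ext_iff, List.cons.injEq] at h; exact Fin.ext (by omega))
        | (simp [vsrc, vsnk, Fin.ext_iff, List.cons.injEq] at h)
        | (exact Fin.ext (by omega))
  · rintro _ ⟨j, rfl⟩
    by_cases h : j.val < k
    · simp only [dif_pos h]
      exact ⟨ssp4 _ _, [vsrc k ⟨0, hk0⟩], [vsnk k ⟨j.val, h⟩], rfl⟩
    · simp only [dif_neg h]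
      exact ⟨ssp4 _ _, [vsrc k ⟨1, hk⟩], [vsnk k ⟨0, hk0⟩], rfl⟩
  · exact muE_fin _ _

lemma lb_Bsnk {k : ℕ} (hk : 1 < k) (j0 : Fin k) :
    k + 1 ≤ muE (EG k) (vB k) (vsnk k j0) := by
  unfold muE
  apply card_lb _ (fun j : Fin (k+1) =>
    if h : j.val < k then [vsrc k ⟨j.val, h⟩, vA k, vB k, vsnk k j0] else [vS0 k, vB k, vsnk k j0])
  · intro j j' h
    by_cases hj : j.val < k <;> by_cases hj' : j'.val < k <;>
      simp only [hj, hj', dif_pos, dif_neg, not_false_iff] at h <;>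
      first
        | (simp [vsrc, vS0, Fin.ext_iff, List.cons.injEq] at h; exact Fin.ext (by omega))
        | (simp [vsrc, vS0, Fin.ext_iff, List.cons.injEq] at h)
        | (exact Fin.ext (by omega))
  · rintro _ ⟨j, rfl⟩
    by_cases h : j.val < k
    · simp only [dif_pos h]
      exact ⟨ssp4 _ _, [vsrc k ⟨j.val, h⟩, vA k], [], rfl⟩
    · simp only [dif_neg h]
      exact ⟨ssp3b _, [vS0 k], [], rfl⟩
  · exact muE_fin _ _

lemma st_bound {k : ℕ} (hk : 1 < k) (v : Fin (2*k+4)) :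
    muS (EG k) v ≤ k ∨ muT (EG k) v ≤ k := by
  have hk0 : 0 < k := by omega
  rcases Nat.lt_or_ge v.val (k+2) with h | h
  · left
    unfold muS
    rcases Nat.lt_or_ge v.val (k+1) with h1 | h1
    · have hsub : {p | IsPath (EG k) p ∧ (∃ s, p.head? = some s ∧ IsSource (EG k) s) ∧
          p.getLast? = some v} ⊆ {[v]} := by
        rintro p ⟨⟨_, hc⟩, _, hl⟩
        exact path_to_source p v (by omega) hc hl
      calc _ ≤ ({[v]} : Set (List (Fin (2*k+4)))).ncard :=
            Set.ncard_le_ncard hsub (Set.finite_singleton _)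
        _ = 1 := Set.ncard_singleton _
        _ ≤ k := hk0
    · have hv : v.val = k+1 := by omega
      have := Set.ncard_le_ncard_of_injOn (s := {p | IsPath (EG k) p ∧
          (∃ s, p.head? = some s ∧ IsSource (EG k) s) ∧ p.getLast? = some v})
          (t := {u : Fin (2*k+4) | u.val < k}) (fun p => p.head?.getD v)
          ?_ ?_ (Set.toFinite _)
      · rw [low_set_ncard] at this
        exact this
      · rintro p ⟨⟨_, hc⟩, hs, hl⟩
        obtain ⟨u, hu, rfl⟩ := path_to_A hk0 p v hv hc hl hs
        simpa using hu
      · rintro p ⟨⟨_, hc⟩, hs, hl⟩ p' ⟨⟨_, hc'⟩, hs', hl'⟩ hpp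
        obtain ⟨u, hu, rfl⟩ := path_to_A hk0 p v hv hc hl hs
        obtain ⟨u', hu', rfl⟩ := path_to_A hk0 p' v hv hc' hl' hs'
        simp at hpp
        rw [hpp]
  · right
    unfold muT
    rcases Nat.lt_or_ge v.val (k+3) with h1 | h1
    · have hv : v.val = k+2 := by omega
      have := Set.ncard_le_ncard_of_injOn (s := {p | IsPath (EG k) p ∧ p.head? = some v ∧
          ∃ t, p.getLast? = some t ∧ IsSink (EG k) t})
          (t := {u : Fin (2*k+4) | k+4 ≤ u.val}) (fun p => p.getLast?.getD v)
          ?_ ?_ (Set.toFinite _)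
      · rw [high_set_ncard] at this
        exact this
      · rintro p ⟨⟨_, hc⟩, hh, ht⟩
        obtain ⟨w, hw, rfl⟩ := path_from_B hk0 p v hv hc hh ht
        simpa using hw
      · rintro p ⟨⟨_, hc⟩, hh, ht⟩ p' ⟨⟨_, hc'⟩, hh', ht'⟩ hpp
        obtain ⟨w, hw, rfl⟩ := path_from_B hk0 p v hv hc hh ht
        obtain ⟨w', hw', rfl⟩ := path_from_B hk0 p' v hv hc' hh' ht'
        simp at hpp
        rw [hpp]
    · have hsub : {p | IsPath (EG k) p ∧ p.head? = some v ∧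
          ∃ t, p.getLast? = some t ∧ IsSink (EG k) t} ⊆ {[v]} := by
        rintro p ⟨⟨_, hc⟩, hh, _⟩
        exact path_from_sink p v (by omega) hc hh
      calc _ ≤ ({[v]} : Set (List (Fin (2*k+4)))).ncard :=
            Set.ncard_le_ncard hsub (Set.finite_singleton _)
        _ = 1 := Set.ncard_singleton _
        _ ≤ k := hk0

end Bounds

/-- For every `k > 1` there is a DAG in `ST_k` that is not a `k`-funnel. -/
theorem stmt12 (k : ℕ) (hk : 1 < k) :
    ∃ (n : ℕ) (E : Fin n → Fin n → Prop), Acyclic E ∧ NoIsolated E ∧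
      (∀ v, muS E v ≤ k ∨ muT E v ≤ k) ∧ ¬ KFunnel E k := by
  have hk0 : 0 < k := by omega
  refine ⟨2*k+4, EG k, ?_, ?_, st_bound hk, ?_⟩
  · -- Acyclic
    intro v hv
    have mono : ∀ a b : Fin (2*k+4), Relation.TransGen (EG k) a b → rk k a < rk k b := by
      intro a b h
      induction h with
      | single h => exact rk_lt h
      | tail _ h ih => exact lt_trans ih (rk_lt h)
    exact lt_irrefl _ (mono v v hv)
  · -- NoIsolated
    intro v
    by_cases h1 : v.val < k
    · exact Or.inr ⟨vA k, Or.inl ⟨h1, rfl⟩⟩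
    by_cases h2 : v.val = k
    · exact Or.inr ⟨vB k, Or.inr (Or.inl ⟨h2, rfl⟩)⟩
    by_cases h3 : v.val = k+1
    · exact Or.inr ⟨vB k, Or.inr (Or.inr (Or.inl ⟨h3, rfl⟩))⟩
    by_cases h4 : v.val = k+2
    · exact Or.inr ⟨vsnk k ⟨0, hk0⟩, Or.inr (Or.inr (Or.inr (Or.inr ⟨h4, by simp [vsnk]⟩)))⟩
    by_cases h5 : v.val = k+3
    · exact Or.inl ⟨vA k, Or.inr (Or.inr (Or.inr (Or.inl ⟨rfl, h5⟩)))⟩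
    · exact Or.inl ⟨vB k, Or.inr (Or.inr (Or.inr (Or.inr ⟨rfl, by omega⟩)))⟩
  · -- not a k-funnel
    intro hK
    obtain ⟨u, v, ⟨l₁, l₂, heq⟩, hμ⟩ :=
      hK [vsrc k ⟨0, hk0⟩, vA k, vB k, vsnk k ⟨0, hk0⟩] (ssp4 _ _)
    rcases l₁ with _ | ⟨x, _ | ⟨y, _ | ⟨z, l⟩⟩⟩
    · simp only [List.nil_append] at heq
      injection heq with h1 heq'
      injection heq' with h2 _
      subst h1; subst h2
      have := lb_srcA hk ⟨0, hk0⟩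
      omega
    · simp only [List.cons_append, List.nil_append] at heq
      injection heq with _ heq'
      injection heq' with h1 heq''
      injection heq'' with h2 _
      subst h1; subst h2
      have := lb_AB hk
      omega
    · simp only [List.cons_append, List.nil_append] at heq
      injection heq with _ heq'
      injection heq' with _ heq''
      injection heq'' with h1 heq'''
      injection heq''' with h2 _
      subst h1; subst h2
      have := lb_Bsnk hk ⟨0, hk0⟩
      omega
    · have := congrArg List.length heq
      simp at this
      omega
end

section
/- Let P_sv be any source-to-v path in a labeled DAG and let B_P = {i : some suffix of P_sv spells S[1..i]}. Then for any i < j in B_P, S[1..i] is a border of S[1..j]; consequently a prefix-incomparable set contains at most one element of B_P. -/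
open List

/-- For a source-to-`v` path `P`, any two prefix lengths spelled by suffixes of
`P` are border-comparable; hence a prefix-incomparable set meets `B_P` at most
once. -/
theorem stmt19 {V α : Type*} (E : V → V → Prop) (hE : Acyclic E) (ℓ : V → α)
    (S : List α) (P : List V) (v : V) (hP : IsPath E P)
    (hPsrc : ∃ s, P.head? = some s ∧ IsSource E s) (hPend : P.getLast? = some v)
    (BP : Set ℕ) (hBP : BP = {i | i ≤ S.length ∧ ∃ p, p <:+ P ∧ p.map ℓ = S.take i}) :
    (∀ i ∈ BP, ∀ j ∈ BP, i < j → IsBorder (S.take i) (S.take j)) ∧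
    ∀ B : Set ℕ, (∀ i ∈ B, ∀ j ∈ B, i < j → ¬ IsBorder (S.take i) (S.take j)) →
      (B ∩ BP).Subsingleton := by
  subst hBP
  have main : ∀ i ∈ {i | i ≤ S.length ∧ ∃ p, p <:+ P ∧ p.map ℓ = S.take i},
      ∀ j ∈ {i | i ≤ S.length ∧ ∃ p, p <:+ P ∧ p.map ℓ = S.take i},
      i < j → IsBorder (S.take i) (S.take j) := by
    rintro i ⟨hi, p, hpP, hpS⟩ j ⟨hj, q, hqP, hqS⟩ hij
    have hlp : p.length = i := by
      have := congrArg List.length hpS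
      simpa [List.length_take, Nat.min_eq_left hi] using this
    have hlq : q.length = j := by
      have := congrArg List.length hqS
      simpa [List.length_take, Nat.min_eq_left hj] using this
    have hpq : p <:+ q := by
      rcases List.suffix_or_suffix_of_suffix hpP hqP with h | h
      · exact h
      · exact absurd (h.length_le) (by omega)
    refine ⟨List.take_prefix_take_left hij.le |>.trans (by rfl), ?_, ?_⟩
    · rw [← hpS, ← hqS]; exact hpq.map ℓ
    · rw [List.length_take, List.length_take]; omega
  refine ⟨main, ?_⟩
  intro B hB x hx y hy
  by_contra hne
  rcases Nat.lt_or_ge x y with h | h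
  · exact hB x hx.1 y hy.1 h (main x hx.2 y hy.2 h)
  · have h' : y < x := lt_of_le_of_ne h (by exact fun e => hne e.symm)
    exact hB y hy.1 x hx.1 h' (main y hy.2 x hx.2 h')
end
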